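/- arXiv:2402.18670 — 6 statements merged into one kernel-verified Lean document; each statement's English description precedes it below -/
import Mathlib

section
/- Let G be a graph of two parallel paths (realized by induced paths P and Q) with nonempty core R. Then G − R is a disjoint union of at most 4 paths P¹,…,P^k (k ≤ 4), and for each i there is exactly one edge x_i y_i of G with x_i a leaf of Pⁱ and y_i ∈ R; moreover every vertex of G − R has degree at most 2 in G. -/
/-- `G` is a graph of two parallel paths. -/
def IsTwoParallelPaths {V : Type*} (G : SimpleGraph V) : Prop :=
  ∃ (k l : ℕ) (v : Fin k → V) (u : Fin l → V),
    Function.Injective v ∧ Function.Injective u ∧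
    (∀ i j, v i ≠ u j) ∧
    (∀ x, (∃ i, v i = x) ∨ (∃ j, u j = x)) ∧
    (∀ i i', G.Adj (v i) (v i') ↔ ((i : ℕ) + 1 = (i' : ℕ) ∨ (i' : ℕ) + 1 = (i : ℕ))) ∧
    (∀ j j', G.Adj (u j) (u j') ↔ ((j : ℕ) + 1 = (j' : ℕ) ∨ (j' : ℕ) + 1 = (j : ℕ))) ∧
    (∀ i j i' j', G.Adj (v i) (u j) → G.Adj (v i') (u j') →
      ¬ ((i < i' ∧ j' < j) ∨ (i' < i ∧ j < j')))

/-- The core of `G`: the set of vertices lying on some cycle. -/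
def core {V : Type*} (G : SimpleGraph V) : Set V :=
  {x | ∃ w : G.Walk x x, w.IsCycle}

/-- The subset `S` induces a path in `G`. -/
def InducesPath {V : Type*} (G : SimpleGraph V) (S : Set V) : Prop :=
  ∃ (k : ℕ) (v : Fin k → V), Function.Injective v ∧ Set.range v = S ∧
    ∀ i i', G.Adj (v i) (v i') ↔ ((i : ℕ) + 1 = (i' : ℕ) ∨ (i' : ℕ) + 1 = (i : ℕ))

open SimpleGraph

namespace TPP

variable {V : Type*} {G : SimpleGraph V}

lemma range_map_shift {α : Type*} (g : ℕ → α) (a n : ℕ) :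
    (List.range (n+1)).map (fun t => g (a + t)) = g a :: (List.range n).map (fun t => g (a+1+t)) := by
  rw [List.range_succ_eq_map, List.map_cons, List.map_map]
  simp only [Nat.add_zero, List.cons.injEq, true_and]
  apply List.map_congr_left
  intro t _
  simp only [Function.comp_apply]
  congr 1
  omega

/-- A segment walk along a function `f : ℕ → V`. -/
def seg (f : ℕ → V) : (a n : ℕ) → (∀ t, a ≤ t → t < a + n → G.Adj (f t) (f (t+1))) →
    G.Walk (f a) (f (a + n))
  | a, 0, _ => Walk.nil.copy rfl (by rw [Nat.add_zero])
  | a, n+1, h =>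
    (Walk.cons (h a le_rfl (by omega))
      (seg f (a+1) n (fun t ht ht' => h t (by omega) (by omega)))).copy rfl
      (congrArg f (by omega))

lemma seg_support (f : ℕ → V) : ∀ (a n : ℕ) (h : ∀ t, a ≤ t → t < a + n → G.Adj (f t) (f (t+1))),
    (seg (G := G) f a n h).support = (List.range (n+1)).map (fun t => f (a + t))
  | a, 0, h => by simp [seg, List.range_succ]
  | a, n+1, h => by
    rw [seg, Walk.support_copy, Walk.support_cons, seg_support f (a+1) n,
      range_map_shift f a (n+1)]

lemma seg_edges (f : ℕ → V) : ∀ (a n : ℕ) (h : ∀ t, a ≤ t → t < a + n → G.Adj (f t) (f (t+1))),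
    (seg (G := G) f a n h).edges = (List.range n).map (fun t => s(f (a + t), f (a + t + 1)))
  | a, 0, h => by simp [seg, List.range_succ]
  | a, n+1, h => by
    rw [seg, Walk.edges_copy, Walk.edges_cons, seg_edges f (a+1) n,
      range_map_shift (fun t => s(f t, f (t+1))) a n]

end TPP

namespace TPP

variable {V : Type*} {G : SimpleGraph V}

lemma path_loop_eq_nil {b : V} (q : G.Walk b b) (hq : q.IsPath) : q = Walk.nil := by
  cases q with
  | nil => rfl
  | cons h2 q2 =>
    rw [Walk.cons_isPath_iff] at hq
    exact absurd q2.end_mem_support hq.2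

lemma cycle_two_neighbors {x : V} {w : G.Walk x x} (hw : w.IsCycle) :
    ∃ y z, y ≠ z ∧ G.Adj x y ∧ G.Adj x z ∧ y ∈ w.support ∧ z ∈ w.support := by
  have hlen := hw.three_le_length
  cases w with
  | nil => exact absurd rfl hw.ne_nil
  | cons h p =>
    rename_i b
    have hp : p.IsPath := by
      rw [Walk.isPath_def]
      have := hw.2
      simpa using this
    have hplen : 2 ≤ p.length := by simp [Walk.length_cons] at hlen; omega
    obtain ⟨c, h', q, hq⟩ := Walk.exists_eq_cons_of_ne h.ne p.reverse
    refine ⟨b, c, ?_, h, h', ?_, ?_⟩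
    · rintro rfl
      have hrp : p.reverse.IsPath := hp.reverse
      rw [hq, Walk.cons_isPath_iff] at hrp
      have : q = Walk.nil := path_loop_eq_nil q hrp.1
      have : p.reverse.length = 1 := by rw [hq, this]; simp
      rw [Walk.length_reverse] at this
      omega
    · simp [Walk.support_cons, p.start_mem_support]
    · have : c ∈ p.reverse.support := by
        rw [hq, Walk.support_cons]
        exact List.mem_cons_of_mem _ q.start_mem_support
      rw [Walk.support_reverse, List.mem_reverse] at this
      simp [Walk.support_cons, this]

lemma cycle_two_neighbors_mem [DecidableEq V] {x₀ x : V} {w : G.Walk x₀ x₀} (hw : w.IsCycle)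
    (hx : x ∈ w.support) :
    ∃ y z, y ≠ z ∧ G.Adj x y ∧ G.Adj x z ∧ y ∈ w.support ∧ z ∈ w.support := by
  obtain ⟨y, z, hyz, hy, hz, hys, hzs⟩ := cycle_two_neighbors (hw.rotate hx)
  have hsub : ∀ a, a ∈ (w.rotate x hx).support → a ∈ w.support := by
    intro a ha
    rw [Walk.mem_support_iff] at ha
    rcases ha with rfl | ha
    · exact hx
    · have := (Walk.support_rotate w x hx).mem_iff.mp ha
      rw [Walk.mem_support_iff]
      exact Or.inr this
  exact ⟨y, z, hyz, hy, hz, hsub y hys, hsub z hzs⟩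

end TPP

namespace TPP

section Main

variable {V : Type*} [DecidableEq V] {G : SimpleGraph V} {k l : ℕ} {v : Fin k → V} {u : Fin l → V}

lemma classify_v (hvu : ∀ i j, v i ≠ u j) (hcov : ∀ x, (∃ i, v i = x) ∨ (∃ j, u j = x))
    (hav : ∀ i i', G.Adj (v i) (v i') ↔ ((i:ℕ)+1 = (i':ℕ) ∨ (i':ℕ)+1 = (i:ℕ)))
    {i : Fin k} {z : V} (h : G.Adj (v i) z) :
    (∃ a : Fin k, z = v a ∧ ((i:ℕ)+1 = (a:ℕ) ∨ (a:ℕ)+1 = (i:ℕ))) ∨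
      (∃ j : Fin l, z = u j ∧ G.Adj (v i) (u j)) := by
  rcases hcov z with ⟨a, rfl⟩ | ⟨j, rfl⟩
  · exact Or.inl ⟨a, rfl, (hav i a).mp h⟩
  · exact Or.inr ⟨j, rfl, h⟩

lemma classify_u (hvu : ∀ i j, v i ≠ u j) (hcov : ∀ x, (∃ i, v i = x) ∨ (∃ j, u j = x))
    (hau : ∀ j j', G.Adj (u j) (u j') ↔ ((j:ℕ)+1 = (j':ℕ) ∨ (j':ℕ)+1 = (j:ℕ)))
    {j : Fin l} {z : V} (h : G.Adj (u j) z) :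
    (∃ b : Fin l, z = u b ∧ ((j:ℕ)+1 = (b:ℕ) ∨ (b:ℕ)+1 = (j:ℕ))) ∨
      (∃ i : Fin k, z = v i ∧ G.Adj (v i) (u j)) := by
  rcases hcov z with ⟨a, rfl⟩ | ⟨b, rfl⟩
  · exact Or.inr ⟨a, rfl, h.symm⟩
  · exact Or.inl ⟨b, rfl, (hau j b).mp h⟩

/-- If `v i` lies on a cycle, there is a cross edge with first index `≥ i`. -/
lemma cycle_cross_above (hv : Function.Injective v)
    (hvu : ∀ i j, v i ≠ u j) (hcov : ∀ x, (∃ i, v i = x) ∨ (∃ j, u j = x))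
    (hav : ∀ i i', G.Adj (v i) (v i') ↔ ((i:ℕ)+1 = (i':ℕ) ∨ (i':ℕ)+1 = (i:ℕ)))
    {x₀ : V} {w : G.Walk x₀ x₀} (hw : w.IsCycle) {i : Fin k} (hi : v i ∈ w.support) :
    ∃ (i' : Fin k) (j' : Fin l), (i:ℕ) ≤ (i':ℕ) ∧ G.Adj (v i') (u j') ∧ v i' ∈ w.support := by
  classical
  set Sv : Finset (Fin k) := Finset.univ.filter (fun a => v a ∈ w.support) with hSv
  have hiS : i ∈ Sv := by simp [hSv, hi]
  have hne : Sv.Nonempty := ⟨i, hiS⟩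
  set m := Sv.max' hne with hm
  have hmS : m ∈ Sv := Sv.max'_mem hne
  have hms : v m ∈ w.support := by simpa [hSv] using hmS
  have hle : ∀ a : Fin k, v a ∈ w.support → (a:ℕ) ≤ (m:ℕ) := by
    intro a ha
    exact Sv.le_max' a (by simp [hSv, ha])
  obtain ⟨y, z, hyz, hy, hz, hys, hzs⟩ := cycle_two_neighbors_mem hw hms
  have key : (∃ j : Fin l, G.Adj (v m) (u j)) := by
    by_contra hno
    push_neg at hno
    have hcy : ∃ a : Fin k, y = v a ∧ (a:ℕ)+1 = (m:ℕ) := by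
      rcases classify_v hvu hcov hav hy with ⟨a, rfl, hrel⟩ | ⟨j, rfl, hj⟩
      · have := hle a hys
        exact ⟨a, rfl, by omega⟩
      · exact absurd hj (hno j)
    have hcz : ∃ a : Fin k, z = v a ∧ (a:ℕ)+1 = (m:ℕ) := by
      rcases classify_v hvu hcov hav hz with ⟨a, rfl, hrel⟩ | ⟨j, rfl, hj⟩
      · have := hle a hzs
        exact ⟨a, rfl, by omega⟩
      · exact absurd hj (hno j)
    obtain ⟨a, rfl, ha⟩ := hcy
    obtain ⟨a', rfl, ha'⟩ := hcz
    exact hyz (by congr 1; exact Fin.ext (by omega))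
  obtain ⟨j, hj⟩ := key
  exact ⟨m, j, hle i hi, hj, hms⟩

/-- If `v i` lies on a cycle, there is a cross edge with first index `≤ i`. -/
lemma cycle_cross_below (hv : Function.Injective v)
    (hvu : ∀ i j, v i ≠ u j) (hcov : ∀ x, (∃ i, v i = x) ∨ (∃ j, u j = x))
    (hav : ∀ i i', G.Adj (v i) (v i') ↔ ((i:ℕ)+1 = (i':ℕ) ∨ (i':ℕ)+1 = (i:ℕ)))
    {x₀ : V} {w : G.Walk x₀ x₀} (hw : w.IsCycle) {i : Fin k} (hi : v i ∈ w.support) :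
    ∃ (i' : Fin k) (j' : Fin l), (i':ℕ) ≤ (i:ℕ) ∧ G.Adj (v i') (u j') ∧ v i' ∈ w.support := by
  classical
  set Sv : Finset (Fin k) := Finset.univ.filter (fun a => v a ∈ w.support) with hSv
  have hiS : i ∈ Sv := by simp [hSv, hi]
  have hne : Sv.Nonempty := ⟨i, hiS⟩
  set m := Sv.min' hne with hm
  have hmS : m ∈ Sv := Sv.min'_mem hne
  have hms : v m ∈ w.support := by simpa [hSv] using hmS
  have hle : ∀ a : Fin k, v a ∈ w.support → (m:ℕ) ≤ (a:ℕ) := by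
    intro a ha
    exact Sv.min'_le a (by simp [hSv, ha])
  obtain ⟨y, z, hyz, hy, hz, hys, hzs⟩ := cycle_two_neighbors_mem hw hms
  have key : (∃ j : Fin l, G.Adj (v m) (u j)) := by
    by_contra hno
    push_neg at hno
    have hcy : ∃ a : Fin k, y = v a ∧ (m:ℕ)+1 = (a:ℕ) := by
      rcases classify_v hvu hcov hav hy with ⟨a, rfl, hrel⟩ | ⟨j, rfl, hj⟩
      · have := hle a hys
        exact ⟨a, rfl, by omega⟩
      · exact absurd hj (hno j)
    have hcz : ∃ a : Fin k, z = v a ∧ (m:ℕ)+1 = (a:ℕ) := by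
      rcases classify_v hvu hcov hav hz with ⟨a, rfl, hrel⟩ | ⟨j, rfl, hj⟩
      · have := hle a hzs
        exact ⟨a, rfl, by omega⟩
      · exact absurd hj (hno j)
    obtain ⟨a, rfl, ha⟩ := hcy
    obtain ⟨a', rfl, ha'⟩ := hcz
    exact hyz (by congr 1; exact Fin.ext (by omega))
  obtain ⟨j, hj⟩ := key
  exact ⟨m, j, hle i hi, hj, hms⟩

/-- If `u j` lies on a cycle, there is a cross edge with second index `≥ j`. -/
lemma cycle_cross_above_u (hu : Function.Injective u)
    (hvu : ∀ i j, v i ≠ u j) (hcov : ∀ x, (∃ i, v i = x) ∨ (∃ j, u j = x))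
    (hau : ∀ j j', G.Adj (u j) (u j') ↔ ((j:ℕ)+1 = (j':ℕ) ∨ (j':ℕ)+1 = (j:ℕ)))
    {x₀ : V} {w : G.Walk x₀ x₀} (hw : w.IsCycle) {j : Fin l} (hj : u j ∈ w.support) :
    ∃ (i' : Fin k) (j' : Fin l), (j:ℕ) ≤ (j':ℕ) ∧ G.Adj (v i') (u j') ∧ u j' ∈ w.support := by
  classical
  set Sv : Finset (Fin l) := Finset.univ.filter (fun a => u a ∈ w.support) with hSv
  have hiS : j ∈ Sv := by simp [hSv, hj]
  have hne : Sv.Nonempty := ⟨j, hiS⟩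
  set m := Sv.max' hne with hm
  have hmS : m ∈ Sv := Sv.max'_mem hne
  have hms : u m ∈ w.support := by simpa [hSv] using hmS
  have hle : ∀ a : Fin l, u a ∈ w.support → (a:ℕ) ≤ (m:ℕ) := by
    intro a ha
    exact Sv.le_max' a (by simp [hSv, ha])
  obtain ⟨y, z, hyz, hy, hz, hys, hzs⟩ := cycle_two_neighbors_mem hw hms
  have key : (∃ i : Fin k, G.Adj (v i) (u m)) := by
    by_contra hno
    push_neg at hno
    have hcy : ∃ a : Fin l, y = u a ∧ (a:ℕ)+1 = (m:ℕ) := by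
      rcases classify_u hvu hcov hau hy with ⟨a, rfl, hrel⟩ | ⟨i, rfl, hi2⟩
      · have := hle a hys
        exact ⟨a, rfl, by omega⟩
      · exact absurd hi2 (hno i)
    have hcz : ∃ a : Fin l, z = u a ∧ (a:ℕ)+1 = (m:ℕ) := by
      rcases classify_u hvu hcov hau hz with ⟨a, rfl, hrel⟩ | ⟨i, rfl, hi2⟩
      · have := hle a hzs
        exact ⟨a, rfl, by omega⟩
      · exact absurd hi2 (hno i)
    obtain ⟨a, rfl, ha⟩ := hcy
    obtain ⟨a', rfl, ha'⟩ := hcz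
    exact hyz (by congr 1; exact Fin.ext (by omega))
  obtain ⟨i, hcross⟩ := key
  exact ⟨i, m, hle j hj, hcross, hms⟩

/-- If `u j` lies on a cycle, there is a cross edge with second index `≤ j`. -/
lemma cycle_cross_below_u (hu : Function.Injective u)
    (hvu : ∀ i j, v i ≠ u j) (hcov : ∀ x, (∃ i, v i = x) ∨ (∃ j, u j = x))
    (hau : ∀ j j', G.Adj (u j) (u j') ↔ ((j:ℕ)+1 = (j':ℕ) ∨ (j':ℕ)+1 = (j:ℕ)))
    {x₀ : V} {w : G.Walk x₀ x₀} (hw : w.IsCycle) {j : Fin l} (hj : u j ∈ w.support) :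
    ∃ (i' : Fin k) (j' : Fin l), (j':ℕ) ≤ (j:ℕ) ∧ G.Adj (v i') (u j') ∧ u j' ∈ w.support := by
  classical
  set Sv : Finset (Fin l) := Finset.univ.filter (fun a => u a ∈ w.support) with hSv
  have hiS : j ∈ Sv := by simp [hSv, hj]
  have hne : Sv.Nonempty := ⟨j, hiS⟩
  set m := Sv.min' hne with hm
  have hmS : m ∈ Sv := Sv.min'_mem hne
  have hms : u m ∈ w.support := by simpa [hSv] using hmS
  have hle : ∀ a : Fin l, u a ∈ w.support → (m:ℕ) ≤ (a:ℕ) := by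
    intro a ha
    exact Sv.min'_le a (by simp [hSv, ha])
  obtain ⟨y, z, hyz, hy, hz, hys, hzs⟩ := cycle_two_neighbors_mem hw hms
  have key : (∃ i : Fin k, G.Adj (v i) (u m)) := by
    by_contra hno
    push_neg at hno
    have hcy : ∃ a : Fin l, y = u a ∧ (m:ℕ)+1 = (a:ℕ) := by
      rcases classify_u hvu hcov hau hy with ⟨a, rfl, hrel⟩ | ⟨i, rfl, hi2⟩
      · have := hle a hys
        exact ⟨a, rfl, by omega⟩
      · exact absurd hi2 (hno i)
    have hcz : ∃ a : Fin l, z = u a ∧ (m:ℕ)+1 = (a:ℕ) := by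
      rcases classify_u hvu hcov hau hz with ⟨a, rfl, hrel⟩ | ⟨i, rfl, hi2⟩
      · have := hle a hzs
        exact ⟨a, rfl, by omega⟩
      · exact absurd hi2 (hno i)
    obtain ⟨a, rfl, ha⟩ := hcy
    obtain ⟨a', rfl, ha'⟩ := hcz
    exact hyz (by congr 1; exact Fin.ext (by omega))
  obtain ⟨i, hcross⟩ := key
  exact ⟨i, m, hle j hj, hcross, hms⟩

end Main

end TPP

namespace TPP

section Cycle

variable {V : Type*} [DecidableEq V] {G : SimpleGraph V} {k l : ℕ} {v : Fin k → V} {u : Fin l → V}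

lemma mem_core_of_between (hv : Function.Injective v) (hu : Function.Injective u)
    (hvu : ∀ i j, v i ≠ u j)
    (hav : ∀ i i', G.Adj (v i) (v i') ↔ ((i:ℕ)+1 = (i':ℕ) ∨ (i':ℕ)+1 = (i:ℕ)))
    (hau : ∀ j j', G.Adj (u j) (u j') ↔ ((j:ℕ)+1 = (j':ℕ) ∨ (j':ℕ)+1 = (j:ℕ)))
    {imin imax : Fin k} {jmin jmax : Fin l}
    (hab : (imin:ℕ) ≤ (imax:ℕ)) (hcd : (jmin:ℕ) ≤ (jmax:ℕ))
    (c1 : G.Adj (v imin) (u jmin)) (c2 : G.Adj (v imax) (u jmax))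
    (hne : ¬((imin:ℕ) = (imax:ℕ) ∧ (jmin:ℕ) = (jmax:ℕ))) :
    (∀ i : Fin k, (imin:ℕ) ≤ (i:ℕ) → (i:ℕ) ≤ (imax:ℕ) → v i ∈ core G) ∧
    (∀ j : Fin l, (jmin:ℕ) ≤ (j:ℕ) → (j:ℕ) ≤ (jmax:ℕ) → u j ∈ core G) := by
  set a := (imin : ℕ) with ha
  set b := (imax : ℕ) with hb
  set c := (jmin : ℕ) with hc
  set d := (jmax : ℕ) with hd
  have hbk : b < k := imax.isLt
  have hdl : d < l := jmax.isLt
  set fP : ℕ → V := fun t => if h : t < k then v ⟨t, h⟩ else v imin with hfP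
  set fQ : ℕ → V := fun t => if h : t < l then u ⟨t, h⟩ else u jmin with hfQ
  have hfPe : ∀ (t : ℕ) (h : t < k), fP t = v ⟨t, h⟩ := fun t h => dif_pos h
  have hfQe : ∀ (t : ℕ) (h : t < l), fQ t = u ⟨t, h⟩ := fun t h => dif_pos h
  have hadjP : ∀ t, a ≤ t → t < a + (b - a) → G.Adj (fP t) (fP (t+1)) := by
    intro t ht ht'
    have h1 : t < k := by omega
    have h2 : t + 1 < k := by omega
    rw [hfPe t h1, hfPe (t+1) h2]
    exact (hav _ _).mpr (Or.inl rfl)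
  have hadjQ : ∀ t, c ≤ t → t < c + (d - c) → G.Adj (fQ t) (fQ (t+1)) := by
    intro t ht ht'
    have h1 : t < l := by omega
    have h2 : t + 1 < l := by omega
    rw [hfQe t h1, hfQe (t+1) h2]
    exact (hau _ _).mpr (Or.inl rfl)
  have eP1 : fP a = v imin := by rw [hfPe a imin.isLt]
  have eP2 : fP (a + (b - a)) = v imax := by
    have h1 : a + (b - a) = b := by omega
    rw [h1, hfPe b hbk]
  have eQ1 : fQ c = u jmin := by rw [hfQe c jmin.isLt]
  have eQ2 : fQ (c + (d - c)) = u jmax := by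
    have h1 : c + (d - c) = d := by omega
    rw [h1, hfQe d hdl]
  set segP : G.Walk (v imin) (v imax) := (seg fP a (b - a) hadjP).copy eP1 eP2 with hsegP
  set segQ : G.Walk (u jmin) (u jmax) := (seg fQ c (d - c) hadjQ).copy eQ1 eQ2 with hsegQ
  set p : G.Walk (u jmin) (v imin) := segQ.append (Walk.cons c2.symm segP.reverse) with hp
  set W : G.Walk (v imin) (v imin) := Walk.cons c1 p with hW
  set Qlist : List V := (List.range (d - c + 1)).map (fun t => fQ (c + t)) with hQlist
  set Plist : List V := (List.range (b - a + 1)).map (fun t => fP (a + t)) with hPlist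
  have hsQ : segQ.support = Qlist := by
    rw [hsegQ, Walk.support_copy, seg_support]
  have hsP : segP.support = Plist := by
    rw [hsegP, Walk.support_copy, seg_support]
  have hps : p.support = Qlist ++ Plist.reverse := by
    rw [hp, Walk.support_append, hsQ]
    congr 1
    rw [Walk.support_cons, List.tail_cons, Walk.support_reverse, hsP]
  have hWs : W.support = v imin :: (Qlist ++ Plist.reverse) := by
    rw [hW, Walk.support_cons, hps]
  -- path property
  have hQnd : Qlist.Nodup := by
    rw [hQlist]
    refine List.Nodup.map_on ?_ List.nodup_range
    intro t ht t' ht' heq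
    rw [List.mem_range] at ht ht'
    have h1 : c + t < l := by omega
    have h2 : c + t' < l := by omega
    rw [hfQe _ h1, hfQe _ h2] at heq
    have h3 : c + t = c + t' := congrArg Fin.val (hu heq)
    omega
  have hPnd : Plist.Nodup := by
    rw [hPlist]
    refine List.Nodup.map_on ?_ List.nodup_range
    intro t ht t' ht' heq
    rw [List.mem_range] at ht ht'
    have h1 : a + t < k := by omega
    have h2 : a + t' < k := by omega
    rw [hfPe _ h1, hfPe _ h2] at heq
    have h3 : a + t = a + t' := congrArg Fin.val (hv heq)
    omega
  have hdisj : Qlist.Disjoint Plist.reverse := by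
    intro x hxQ hxP
    rw [hQlist, List.mem_map] at hxQ
    rw [List.mem_reverse, hPlist, List.mem_map] at hxP
    obtain ⟨t, ht, rfl⟩ := hxQ
    obtain ⟨s, hs, hsx⟩ := hxP
    rw [List.mem_range] at ht hs
    have h1 : c + t < l := by omega
    have h2 : a + s < k := by omega
    rw [hfQe _ h1] at hsx
    rw [hfPe _ h2] at hsx
    exact hvu _ _ hsx
  have hppath : p.IsPath := by
    rw [Walk.isPath_def, hps]
    exact List.Nodup.append hQnd (List.nodup_reverse.mpr hPnd) hdisj
  -- edges
  have heQ : segQ.edges = (List.range (d - c)).map (fun t => s(fQ (c + t), fQ (c + t + 1))) := by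
    rw [hsegQ, Walk.edges_copy, seg_edges]
  have heP : segP.edges = (List.range (b - a)).map (fun t => s(fP (a + t), fP (a + t + 1))) := by
    rw [hsegP, Walk.edges_copy, seg_edges]
  have hpe : p.edges = segQ.edges ++ (s(u jmax, v imax) :: segP.edges.reverse) := by
    rw [hp, Walk.edges_append, Walk.edges_cons, Walk.edges_reverse]
  have hWc : W.IsCycle := by
    rw [hW, Walk.cons_isCycle_iff]
    refine ⟨hppath, ?_⟩
    intro hmem
    rw [hpe, List.mem_append, List.mem_cons] at hmem
    rcases hmem with hmem | hmem | hmem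
    · rw [heQ, List.mem_map] at hmem
      obtain ⟨t, ht, heq⟩ := hmem
      rw [List.mem_range] at ht
      have h1 : c + t < l := by omega
      have h2 : c + t + 1 < l := by omega
      rw [hfQe _ h1, hfQe _ h2, Sym2.eq_iff] at heq
      rcases heq with ⟨h3, _⟩ | ⟨_, h3⟩
      · exact hvu _ _ h3.symm
      · exact hvu _ _ h3.symm
    · rw [Sym2.eq_iff] at hmem
      rcases hmem with ⟨h3, _⟩ | ⟨h3, h4⟩
      · exact hvu _ _ h3
      · exact hne ⟨congrArg Fin.val (hv h3), congrArg Fin.val (hu h4)⟩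
    · rw [List.mem_reverse, heP, List.mem_map] at hmem
      obtain ⟨t, ht, heq⟩ := hmem
      rw [List.mem_range] at ht
      have h1 : a + t < k := by omega
      have h2 : a + t + 1 < k := by omega
      rw [hfPe _ h1, hfPe _ h2, Sym2.eq_iff] at heq
      rcases heq with ⟨_, h3⟩ | ⟨h3, _⟩
      · exact hvu _ _ h3
      · exact hvu _ _ h3
  constructor
  · intro i hi1 hi2
    have hmem : v i ∈ W.support := by
      rw [hWs]
      refine List.mem_cons_of_mem _ (List.mem_append.mpr (Or.inr ?_))
      rw [List.mem_reverse, hPlist, List.mem_map]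
      refine ⟨(i : ℕ) - a, by rw [List.mem_range]; omega, ?_⟩
      have h1 : a + ((i:ℕ) - a) < k := by omega
      rw [hfPe _ h1]
      congr 1
      exact Fin.ext (by simp; omega)
    exact ⟨W.rotate (v i) hmem, hWc.rotate hmem⟩
  · intro j hj1 hj2
    have hmem : u j ∈ W.support := by
      rw [hWs]
      refine List.mem_cons_of_mem _ (List.mem_append.mpr (Or.inl ?_))
      rw [hQlist, List.mem_map]
      refine ⟨(j : ℕ) - c, by rw [List.mem_range]; omega, ?_⟩
      have h1 : c + ((j:ℕ) - c) < l := by omega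
      rw [hfQe _ h1]
      congr 1
      exact Fin.ext (by simp; omega)
    exact ⟨W.rotate (u j) hmem, hWc.rotate hmem⟩

end Cycle

end TPP

namespace TPP

section Uniq

variable {V : Type*} [DecidableEq V] {G : SimpleGraph V} {k l : ℕ} {v : Fin k → V} {u : Fin l → V}

lemma not_unique_cross (hv : Function.Injective v) (hu : Function.Injective u)
    (hvu : ∀ i j, v i ≠ u j) (hcov : ∀ x, (∃ i, v i = x) ∨ (∃ j, u j = x))
    (hav : ∀ i i', G.Adj (v i) (v i') ↔ ((i:ℕ)+1 = (i':ℕ) ∨ (i':ℕ)+1 = (i:ℕ)))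
    (hau : ∀ j j', G.Adj (u j) (u j') ↔ ((j:ℕ)+1 = (j':ℕ) ∨ (j':ℕ)+1 = (j:ℕ)))
    {x₀ : V} {w : G.Walk x₀ x₀} (hw : w.IsCycle)
    {i₀ : Fin k} {j₀ : Fin l}
    (huniq : ∀ (i : Fin k) (j : Fin l), G.Adj (v i) (u j) → i = i₀ ∧ j = j₀) : False := by
  have hbndv : ∀ i : Fin k, v i ∈ w.support → i = i₀ := by
    intro i hi
    obtain ⟨i1, j1, h1, hadj1, _⟩ := cycle_cross_above hv hvu hcov hav hw hi
    obtain ⟨i2, j2, h2, hadj2, _⟩ := cycle_cross_below hv hvu hcov hav hw hi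
    have e1 := (huniq _ _ hadj1).1
    have e2 := (huniq _ _ hadj2).1
    apply Fin.ext
    have := congrArg Fin.val e1
    have := congrArg Fin.val e2
    omega
  have hbndu : ∀ j : Fin l, u j ∈ w.support → j = j₀ := by
    intro j hj
    obtain ⟨i1, j1, h1, hadj1, _⟩ := cycle_cross_above_u hu hvu hcov hau hw hj
    obtain ⟨i2, j2, h2, hadj2, _⟩ := cycle_cross_below_u hu hvu hcov hau hw hj
    have e1 := (huniq _ _ hadj1).2
    have e2 := (huniq _ _ hadj2).2
    apply Fin.ext
    have := congrArg Fin.val e1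
    have := congrArg Fin.val e2
    omega
  rcases hcov x₀ with ⟨i, hi⟩ | ⟨j, hj⟩
  · have hs : v i ∈ w.support := hi ▸ w.start_mem_support
    have : i = i₀ := hbndv i hs
    subst this
    obtain ⟨y, z, hyz, hy, hz, hys, hzs⟩ := cycle_two_neighbors_mem hw hs
    have hcl : ∀ t, t ∈ w.support → G.Adj (v i) t → t = u j₀ := by
      intro t hts hadj
      rcases classify_v hvu hcov hav hadj with ⟨a, rfl, hrel⟩ | ⟨j, rfl, hj2⟩
      · have := hbndv a hts
        subst this
        omega
      · rw [(huniq _ _ hj2).2]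
    rw [hcl y hys hy, hcl z hzs hz] at hyz
    exact hyz rfl
  · have hs : u j ∈ w.support := hj ▸ w.start_mem_support
    have : j = j₀ := hbndu j hs
    subst this
    obtain ⟨y, z, hyz, hy, hz, hys, hzs⟩ := cycle_two_neighbors_mem hw hs
    have hcl : ∀ t, t ∈ w.support → G.Adj (u j) t → t = v i₀ := by
      intro t hts hadj
      rcases classify_u hvu hcov hau hadj with ⟨b, rfl, hrel⟩ | ⟨i, rfl, hi2⟩
      · have := hbndu b hts
        subst this
        omega
      · rw [(huniq _ _ hi2).1]
    rw [hcl y hys hy, hcl z hzs hz] at hyz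
    exact hyz rfl

end Uniq

end TPP

open TPP in
/-- If G is a graph of two parallel paths with nonempty core R, then every
vertex outside R has degree at most 2 in G, and G − R is a disjoint union of at
most 4 paths, each joined to R by exactly one edge, whose endpoint in the path
is a leaf of that path. -/
theorem stmt_11 {V : Type*} [Fintype V] (G : SimpleGraph V)
    (hpp : IsTwoParallelPaths G) (hR : (core G).Nonempty) :
    (∀ x, x ∉ core G → {z | G.Adj x z}.ncard ≤ 2) ∧
    ∃ k : ℕ, k ≤ 4 ∧ ∃ S : Fin k → Set V,
      (∀ i, (S i).Nonempty) ∧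
      (∀ i j, i ≠ j → Disjoint (S i) (S j)) ∧
      (⋃ i, S i) = (core G)ᶜ ∧
      (∀ i, InducesPath G (S i)) ∧
      (∀ i j, i ≠ j → ∀ x ∈ S i, ∀ y ∈ S j, ¬ G.Adj x y) ∧
      (∀ i, ∃ x y, x ∈ S i ∧ y ∈ core G ∧ G.Adj x y ∧
        {z | z ∈ S i ∧ G.Adj x z}.ncard ≤ 1 ∧
        ∀ x' y', x' ∈ S i → y' ∈ core G → G.Adj x' y' → x' = x ∧ y' = y) := by
  classical
  obtain ⟨k, l, v, u, hv, hu, hvu, hcov, hav, hau, hx⟩ := hpp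
  obtain ⟨x₀, hx₀⟩ := hR
  obtain ⟨w, hw⟩ := hx₀
  set E : Finset (Fin k × Fin l) := Finset.univ.filter (fun pr => G.Adj (v pr.1) (u pr.2))
    with hE
  have hmemE : ∀ pr : Fin k × Fin l, pr ∈ E ↔ G.Adj (v pr.1) (u pr.2) := by
    intro pr; simp [hE]
  have hEne : E.Nonempty := by
    rcases hcov x₀ with ⟨i, hi⟩ | ⟨j, hj⟩
    · obtain ⟨i', j', _, hadj, _⟩ :=
        cycle_cross_above hv hvu hcov hav hw (show v i ∈ w.support by rw [hi]; exact w.start_mem_support)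
      exact ⟨(i', j'), (hmemE _).mpr hadj⟩
    · obtain ⟨i', j', _, hadj, _⟩ :=
        cycle_cross_above_u hu hvu hcov hau hw (show u j ∈ w.support by rw [hj]; exact w.start_mem_support)
      exact ⟨(i', j'), (hmemE _).mpr hadj⟩
  have hEi : (E.image Prod.fst).Nonempty := hEne.image _
  have hEj : (E.image Prod.snd).Nonempty := hEne.image _
  set imin := (E.image Prod.fst).min' hEi with himin
  set imax := (E.image Prod.fst).max' hEi with himax
  set jmin := (E.image Prod.snd).min' hEj with hjmin
  set jmax := (E.image Prod.snd).max' hEj with hjmax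
  -- bounds for any cross edge
  have hbounds : ∀ (i : Fin k) (j : Fin l), G.Adj (v i) (u j) →
      (imin:ℕ) ≤ i ∧ (i:ℕ) ≤ imax ∧ (jmin:ℕ) ≤ j ∧ (j:ℕ) ≤ jmax := by
    intro i j hadj
    have hm : (i, j) ∈ E := (hmemE _).mpr hadj
    refine ⟨?_, ?_, ?_, ?_⟩
    · exact Finset.min'_le _ _ (Finset.mem_image_of_mem Prod.fst hm)
    · exact Finset.le_max' _ _ (Finset.mem_image_of_mem Prod.fst hm)
    · exact Finset.min'_le _ _ (Finset.mem_image_of_mem Prod.snd hm)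
    · exact Finset.le_max' _ _ (Finset.mem_image_of_mem Prod.snd hm)
  -- corner cross edges
  obtain ⟨p1, hp1E, hp1⟩ : ∃ pr ∈ E, pr.1 = imin := by
    have := (E.image Prod.fst).min'_mem hEi
    rw [← himin] at this
    obtain ⟨pr, hpr, h⟩ := Finset.mem_image.mp this
    exact ⟨pr, hpr, h⟩
  obtain ⟨p2, hp2E, hp2⟩ : ∃ pr ∈ E, pr.2 = jmin := by
    have := (E.image Prod.snd).min'_mem hEj
    rw [← hjmin] at this
    obtain ⟨pr, hpr, h⟩ := Finset.mem_image.mp this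
    exact ⟨pr, hpr, h⟩
  obtain ⟨q1, hq1E, hq1⟩ : ∃ pr ∈ E, pr.1 = imax := by
    have := (E.image Prod.fst).max'_mem hEi
    rw [← himax] at this
    obtain ⟨pr, hpr, h⟩ := Finset.mem_image.mp this
    exact ⟨pr, hpr, h⟩
  obtain ⟨q2, hq2E, hq2⟩ : ∃ pr ∈ E, pr.2 = jmax := by
    have := (E.image Prod.snd).max'_mem hEj
    rw [← hjmax] at this
    obtain ⟨pr, hpr, h⟩ := Finset.mem_image.mp this
    exact ⟨pr, hpr, h⟩
  have hadjp1 : G.Adj (v imin) (u p1.2) := by rw [← hp1]; exact (hmemE _).mp hp1E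
  have hadjp2 : G.Adj (v p2.1) (u jmin) := by rw [← hp2]; exact (hmemE _).mp hp2E
  have hadjq1 : G.Adj (v imax) (u q1.2) := by rw [← hq1]; exact (hmemE _).mp hq1E
  have hadjq2 : G.Adj (v q2.1) (u jmax) := by rw [← hq2]; exact (hmemE _).mp hq2E
  have corner1 : G.Adj (v imin) (u jmin) := by
    by_cases h1 : (p2.1 : ℕ) = (imin : ℕ)
    · have : p2.1 = imin := Fin.ext h1
      rwa [← this]
    · by_cases h2 : (p1.2 : ℕ) = (jmin : ℕ)
      · have : p1.2 = jmin := Fin.ext h2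
        rwa [← this]
      · exfalso
        have hb1 := hbounds _ _ hadjp1
        have hb2 := hbounds _ _ hadjp2
        refine hx p2.1 jmin imin p1.2 hadjp2 hadjp1 (Or.inr ⟨?_, ?_⟩)
        · rw [Fin.lt_def]; omega
        · rw [Fin.lt_def]; omega
  have corner2 : G.Adj (v imax) (u jmax) := by
    by_cases h1 : (q2.1 : ℕ) = (imax : ℕ)
    · have : q2.1 = imax := Fin.ext h1
      rwa [← this]
    · by_cases h2 : (q1.2 : ℕ) = (jmax : ℕ)
      · have : q1.2 = jmax := Fin.ext h2
        rwa [← this]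
      · exfalso
        have hb1 := hbounds _ _ hadjq1
        have hb2 := hbounds _ _ hadjq2
        refine hx q2.1 jmax imax q1.2 hadjq2 hadjq1 (Or.inl ⟨?_, ?_⟩)
        · rw [Fin.lt_def]; omega
        · rw [Fin.lt_def]; omega
  have hab : (imin:ℕ) ≤ (imax:ℕ) := by
    have := hbounds _ _ corner1
    omega
  have hcd : (jmin:ℕ) ≤ (jmax:ℕ) := by
    have := hbounds _ _ corner1
    omega
  have hnec : ¬((imin:ℕ) = (imax:ℕ) ∧ (jmin:ℕ) = (jmax:ℕ)) := by
    rintro ⟨h1, h2⟩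
    refine not_unique_cross hv hu hvu hcov hav hau hw (i₀ := imin) (j₀ := jmin) ?_
    intro i j hadj
    have := hbounds _ _ hadj
    exact ⟨Fin.ext (by omega), Fin.ext (by omega)⟩
  have hcoremem := mem_core_of_between hv hu hvu hav hau hab hcd corner1 corner2 hnec
  have hcore_eq : ∀ x, x ∈ core G ↔
      ((∃ i : Fin k, x = v i ∧ (imin:ℕ) ≤ i ∧ (i:ℕ) ≤ imax) ∨
       (∃ j : Fin l, x = u j ∧ (jmin:ℕ) ≤ j ∧ (j:ℕ) ≤ jmax)) := by
    intro x
    constructor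
    · rintro ⟨w', hw'⟩
      rcases hcov x with ⟨i, hi⟩ | ⟨j, hj⟩
      · left
        have hs : v i ∈ w'.support := by rw [hi]; exact w'.start_mem_support
        obtain ⟨i1, j1, h1, hadj1, _⟩ := cycle_cross_above hv hvu hcov hav hw' hs
        obtain ⟨i2, j2, h2, hadj2, _⟩ := cycle_cross_below hv hvu hcov hav hw' hs
        have hb1 := hbounds _ _ hadj1
        have hb2 := hbounds _ _ hadj2
        exact ⟨i, hi.symm, by omega, by omega⟩
      · right
        have hs : u j ∈ w'.support := by rw [hj]; exact w'.start_mem_support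
        obtain ⟨i1, j1, h1, hadj1, _⟩ := cycle_cross_above_u hu hvu hcov hau hw' hs
        obtain ⟨i2, j2, h2, hadj2, _⟩ := cycle_cross_below_u hu hvu hcov hau hw' hs
        have hb1 := hbounds _ _ hadj1
        have hb2 := hbounds _ _ hadj2
        exact ⟨j, hj.symm, by omega, by omega⟩
    · rintro (⟨i, rfl, h1, h2⟩ | ⟨j, rfl, h1, h2⟩)
      · exact hcoremem.1 i h1 h2
      · exact hcoremem.2 j h1 h2
  -- the four tails
  set T0 : Set V := {x | ∃ i : Fin k, x = v i ∧ (i:ℕ) < imin} with hT0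
  set T1 : Set V := {x | ∃ i : Fin k, x = v i ∧ (imax:ℕ) < i} with hT1
  set T2 : Set V := {x | ∃ j : Fin l, x = u j ∧ (j:ℕ) < jmin} with hT2
  set T3 : Set V := {x | ∃ j : Fin l, x = u j ∧ (jmax:ℕ) < j} with hT3
  have hnotcore : ∀ x, x ∉ core G ↔ (x ∈ T0 ∨ x ∈ T1 ∨ x ∈ T2 ∨ x ∈ T3) := by
    intro x
    rw [hcore_eq]
    rcases hcov x with ⟨i, rfl⟩ | ⟨j, rfl⟩
    · constructor
      · intro h
        push_neg at h
        obtain ⟨h1, -⟩ := h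
        have := h1 i rfl
        by_cases hlt : (i:ℕ) < imin
        · exact Or.inl ⟨i, rfl, hlt⟩
        · exact Or.inr (Or.inl ⟨i, rfl, by omega⟩)
      · rintro (⟨i', heq, hlt⟩ | ⟨i', heq, hlt⟩ | ⟨j', heq, _⟩ | ⟨j', heq, _⟩)
        · have hii := hv heq
          rintro (⟨i2, he2, hb1, hb2⟩ | ⟨j2, he2, _, _⟩)
          · have e1 := congrArg Fin.val (hv he2)
            have e2 := congrArg Fin.val hii
            omega
          · exact hvu _ _ he2
        · have hii := hv heq
          rintro (⟨i2, he2, hb1, hb2⟩ | ⟨j2, he2, _, _⟩)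
          · have e1 := congrArg Fin.val (hv he2)
            have e2 := congrArg Fin.val hii
            omega
          · exact hvu _ _ he2
        · exact absurd heq (hvu _ _)
        · exact absurd heq (hvu _ _)
    · constructor
      · intro h
        push_neg at h
        obtain ⟨-, h2⟩ := h
        have := h2 j rfl
        by_cases hlt : (j:ℕ) < jmin
        · exact Or.inr (Or.inr (Or.inl ⟨j, rfl, hlt⟩))
        · exact Or.inr (Or.inr (Or.inr ⟨j, rfl, by omega⟩))
      · rintro (⟨i', heq, _⟩ | ⟨i', heq, _⟩ | ⟨j', heq, hlt⟩ | ⟨j', heq, hlt⟩)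
        · exact absurd heq.symm (hvu _ _)
        · exact absurd heq.symm (hvu _ _)
        · have hjj := hu heq
          rintro (⟨i2, he2, _, _⟩ | ⟨j2, he2, hb1, hb2⟩)
          · exact absurd he2.symm (hvu _ _)
          · have e1 := congrArg Fin.val (hu he2)
            have e2 := congrArg Fin.val hjj
            omega
        · have hjj := hu heq
          rintro (⟨i2, he2, _, _⟩ | ⟨j2, he2, hb1, hb2⟩)
          · exact absurd he2.symm (hvu _ _)
          · have e1 := congrArg Fin.val (hu he2)
            have e2 := congrArg Fin.val hjj
            omega
  have hk0 : 0 < k := imin.pos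
  have hl0 : 0 < l := jmin.pos
  -- degree bound
  have hpair : ∀ (x z1 z2 : V), {z | G.Adj x z} ⊆ {z1, z2} → {z | G.Adj x z}.ncard ≤ 2 := by
    intro x z1 z2 hsub
    calc {z | G.Adj x z}.ncard ≤ ({z1, z2} : Set V).ncard :=
          Set.ncard_le_ncard hsub (Set.toFinite _)
      _ ≤ ({z2} : Set V).ncard + 1 := Set.ncard_insert_le _ _
      _ ≤ 2 := by rw [Set.ncard_singleton]
  have hdeg : ∀ x, x ∉ core G → {z | G.Adj x z}.ncard ≤ 2 := by
    intro x hxc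
    rw [hnotcore] at hxc
    have hvcase : ∀ i : Fin k, ((i:ℕ) < imin ∨ (imax:ℕ) < i) → {z | G.Adj (v i) z}.ncard ≤ 2 := by
      intro i hi
      set z1 : V := if h : (i:ℕ) + 1 < k then v ⟨(i:ℕ)+1, h⟩ else v i with hz1
      set z2 : V := v ⟨(i:ℕ) - 1, by omega⟩ with hz2
      apply hpair _ z1 z2
      intro z hz
      simp only [Set.mem_setOf_eq] at hz
      simp only [Set.mem_insert_iff, Set.mem_singleton_iff]
      rcases classify_v hvu hcov hav hz with ⟨a, rfl, hrel⟩ | ⟨j, rfl, hj⟩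
      · rcases hrel with h1 | h1
        · left
          have hlt : (i:ℕ)+1 < k := by have := a.isLt; omega
          rw [hz1, dif_pos hlt]
          congr 1
          exact Fin.ext (by simp; omega)
        · right
          rw [hz2]
          congr 1
          exact Fin.ext (by simp; omega)
      · exfalso
        have := hbounds _ _ hj
        omega
    have hucase : ∀ j : Fin l, ((j:ℕ) < jmin ∨ (jmax:ℕ) < j) → {z | G.Adj (u j) z}.ncard ≤ 2 := by
      intro j hj
      set z1 : V := if h : (j:ℕ) + 1 < l then u ⟨(j:ℕ)+1, h⟩ else u j with hz1
      set z2 : V := u ⟨(j:ℕ) - 1, by omega⟩ with hz2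
      apply hpair _ z1 z2
      intro z hz
      simp only [Set.mem_setOf_eq] at hz
      simp only [Set.mem_insert_iff, Set.mem_singleton_iff]
      rcases classify_u hvu hcov hau hz with ⟨b, rfl, hrel⟩ | ⟨i, rfl, hi⟩
      · rcases hrel with h1 | h1
        · left
          have hlt : (j:ℕ)+1 < l := by have := b.isLt; omega
          rw [hz1, dif_pos hlt]
          congr 1
          exact Fin.ext (by simp; omega)
        · right
          rw [hz2]
          congr 1
          exact Fin.ext (by simp; omega)
      · exfalso
        have := hbounds _ _ hi
        omega
    rcases hxc with ⟨i, rfl, h1⟩ | ⟨i, rfl, h1⟩ | ⟨j, rfl, h1⟩ | ⟨j, rfl, h1⟩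
    · exact hvcase i (Or.inl h1)
    · exact hvcase i (Or.inr h1)
    · exact hucase j (Or.inl h1)
    · exact hucase j (Or.inr h1)
  refine ⟨hdeg, ?_⟩
  -- the indexed family
  set T : Fin 4 → Set V := fun s => [T0, T1, T2, T3].getD s.val ∅ with hT
  have hTmem : ∀ x (s : Fin 4), x ∈ T s → (x ∈ T0 ∨ x ∈ T1 ∨ x ∈ T2 ∨ x ∈ T3) := by
    intro x s
    fin_cases s
    · exact fun h => Or.inl h
    · exact fun h => Or.inr (Or.inl h)
    · exact fun h => Or.inr (Or.inr (Or.inl h))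
    · exact fun h => Or.inr (Or.inr (Or.inr h))
  -- pairwise disjoint
  have d01 : Disjoint T0 T1 := by
    rw [Set.disjoint_left]
    rintro x ⟨i1, rfl, hI⟩ ⟨i2, heq, hJ⟩
    have := congrArg Fin.val (hv heq)
    omega
  have d23 : Disjoint T2 T3 := by
    rw [Set.disjoint_left]
    rintro x ⟨j1, rfl, hI⟩ ⟨j2, heq, hJ⟩
    have := congrArg Fin.val (hu heq)
    omega
  have d02 : Disjoint T0 T2 := by
    rw [Set.disjoint_left]
    rintro x ⟨i1, rfl, hI⟩ ⟨j2, heq, hJ⟩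
    exact hvu _ _ heq
  have d03 : Disjoint T0 T3 := by
    rw [Set.disjoint_left]
    rintro x ⟨i1, rfl, hI⟩ ⟨j2, heq, hJ⟩
    exact hvu _ _ heq
  have d12 : Disjoint T1 T2 := by
    rw [Set.disjoint_left]
    rintro x ⟨i1, rfl, hI⟩ ⟨j2, heq, hJ⟩
    exact hvu _ _ heq
  have d13 : Disjoint T1 T3 := by
    rw [Set.disjoint_left]
    rintro x ⟨i1, rfl, hI⟩ ⟨j2, heq, hJ⟩
    exact hvu _ _ heq
  have hTdisj : ∀ s t : Fin 4, s ≠ t → Disjoint (T s) (T t) := by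
    intro s t hst
    fin_cases s <;> fin_cases t <;>
      first
        | exact absurd rfl hst
        | exact d01 | exact d02 | exact d03 | exact d12 | exact d13 | exact d23
        | exact d01.symm | exact d02.symm | exact d03.symm
        | exact d12.symm | exact d13.symm | exact d23.symm
  -- non-adjacency across tails
  have hnadj01 : ∀ x ∈ T0, ∀ y ∈ T1, ¬G.Adj x y := by
    rintro x ⟨i1, rfl, h1⟩ y ⟨i2, rfl, h2⟩ hadj
    have := (hav _ _).mp hadj
    omega
  have hnadj23 : ∀ x ∈ T2, ∀ y ∈ T3, ¬G.Adj x y := by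
    rintro x ⟨j1, rfl, h1⟩ y ⟨j2, rfl, h2⟩ hadj
    have := (hau _ _).mp hadj
    omega
  have hnadjvu : ∀ x, (x ∈ T0 ∨ x ∈ T1) → ∀ y, (y ∈ T2 ∨ y ∈ T3) → ¬G.Adj x y := by
    intro x hxm y hym hadj
    rcases hxm with ⟨i1, rfl, h1⟩ | ⟨i1, rfl, h1⟩ <;>
      rcases hym with ⟨j1, rfl, h2⟩ | ⟨j1, rfl, h2⟩ <;>
      · have := hbounds _ _ hadj
        omega
  have hTnadj : ∀ s t : Fin 4, s ≠ t → ∀ x ∈ T s, ∀ y ∈ T t, ¬G.Adj x y := by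
    intro s t hst x hxs y hyt
    fin_cases s <;> fin_cases t <;>
      first
        | exact absurd rfl hst
        | exact hnadj01 x hxs y hyt
        | exact fun h => hnadj01 y hyt x hxs h.symm
        | exact hnadj23 x hxs y hyt
        | exact fun h => hnadj23 y hyt x hxs h.symm
        | exact hnadjvu x (Or.inl hxs) y (Or.inl hyt)
        | exact hnadjvu x (Or.inl hxs) y (Or.inr hyt)
        | exact hnadjvu x (Or.inr hxs) y (Or.inl hyt)
        | exact hnadjvu x (Or.inr hxs) y (Or.inr hyt)
        | exact fun h => hnadjvu y (Or.inl hyt) x (Or.inl hxs) h.symm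
        | exact fun h => hnadjvu y (Or.inl hyt) x (Or.inr hxs) h.symm
        | exact fun h => hnadjvu y (Or.inr hyt) x (Or.inl hxs) h.symm
        | exact fun h => hnadjvu y (Or.inr hyt) x (Or.inr hxs) h.symm
  -- each tail induces a path
  have hpath0 : InducesPath G T0 := by
    refine ⟨(imin:ℕ), fun t => v ⟨(t:ℕ), lt_trans t.isLt imin.isLt⟩, ?_, ?_, ?_⟩
    · intro t t' h
      exact Fin.ext (by have := congrArg Fin.val (hv h); simpa using this)
    · ext x
      simp only [Set.mem_range, hT0, Set.mem_setOf_eq]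
      constructor
      · rintro ⟨t, rfl⟩
        exact ⟨_, rfl, by simpa using t.isLt⟩
      · rintro ⟨i, rfl, hi⟩
        exact ⟨⟨(i:ℕ), hi⟩, rfl⟩
    · intro t t'
      exact hav _ _
  have hpath1 : InducesPath G T1 := by
    refine ⟨k - 1 - (imax:ℕ), fun t => v ⟨(imax:ℕ)+1+(t:ℕ), by have := t.isLt; omega⟩, ?_, ?_, ?_⟩
    · intro t t' h
      exact Fin.ext (by have := congrArg Fin.val (hv h); simp at this; omega)
    · ext x
      simp only [Set.mem_range, hT1, Set.mem_setOf_eq]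
      constructor
      · rintro ⟨t, rfl⟩
        refine ⟨_, rfl, ?_⟩
        show (imax:ℕ) < (imax:ℕ)+1+(t:ℕ)
        omega
      · rintro ⟨i, rfl, hi⟩
        refine ⟨⟨(i:ℕ) - (imax:ℕ) - 1, by have := i.isLt; omega⟩, ?_⟩
        congr 1
        exact Fin.ext (by simp; omega)
    · intro t t'
      rw [hav]
      show ((imax:ℕ)+1+(t:ℕ)+1 = (imax:ℕ)+1+(t':ℕ) ∨ (imax:ℕ)+1+(t':ℕ)+1 = (imax:ℕ)+1+(t:ℕ)) ↔ _
      omega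
  have hpath2 : InducesPath G T2 := by
    refine ⟨(jmin:ℕ), fun t => u ⟨(t:ℕ), lt_trans t.isLt jmin.isLt⟩, ?_, ?_, ?_⟩
    · intro t t' h
      exact Fin.ext (by have := congrArg Fin.val (hu h); simpa using this)
    · ext x
      simp only [Set.mem_range, hT2, Set.mem_setOf_eq]
      constructor
      · rintro ⟨t, rfl⟩
        exact ⟨_, rfl, by simpa using t.isLt⟩
      · rintro ⟨j, rfl, hj⟩
        exact ⟨⟨(j:ℕ), hj⟩, rfl⟩
    · intro t t'
      exact hau _ _
  have hpath3 : InducesPath G T3 := by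
    refine ⟨l - 1 - (jmax:ℕ), fun t => u ⟨(jmax:ℕ)+1+(t:ℕ), by have := t.isLt; omega⟩, ?_, ?_, ?_⟩
    · intro t t' h
      exact Fin.ext (by have := congrArg Fin.val (hu h); simp at this; omega)
    · ext x
      simp only [Set.mem_range, hT3, Set.mem_setOf_eq]
      constructor
      · rintro ⟨t, rfl⟩
        refine ⟨_, rfl, ?_⟩
        show (jmax:ℕ) < (jmax:ℕ)+1+(t:ℕ)
        omega
      · rintro ⟨j, rfl, hj⟩
        refine ⟨⟨(j:ℕ) - (jmax:ℕ) - 1, by have := j.isLt; omega⟩, ?_⟩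
        congr 1
        exact Fin.ext (by simp; omega)
    · intro t t'
      rw [hau]
      show ((jmax:ℕ)+1+(t:ℕ)+1 = (jmax:ℕ)+1+(t':ℕ) ∨ (jmax:ℕ)+1+(t':ℕ)+1 = (jmax:ℕ)+1+(t:ℕ)) ↔ _
      omega
  have hallpath : ∀ s : Fin 4, InducesPath G (T s) := by
    intro s
    fin_cases s
    · exact hpath0
    · exact hpath1
    · exact hpath2
    · exact hpath3
  -- unique attaching edges
  have hedge0 : T0.Nonempty → ∃ x y, x ∈ T0 ∧ y ∈ core G ∧ G.Adj x y ∧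
      {z | z ∈ T0 ∧ G.Adj x z}.ncard ≤ 1 ∧
      ∀ x' y', x' ∈ T0 → y' ∈ core G → G.Adj x' y' → x' = x ∧ y' = y := by
    rintro ⟨x, i1, rfl, h1⟩
    have ha1 : 1 ≤ (imin:ℕ) := by omega
    set i₁ : Fin k := ⟨(imin:ℕ)-1, by omega⟩ with hi₁
    set i₂ : Fin k := ⟨(imin:ℕ)-2, by omega⟩ with hi₂
    have e1 : (i₁:ℕ) = (imin:ℕ)-1 := rfl
    have e2 : (i₂:ℕ) = (imin:ℕ)-2 := rfl
    refine ⟨v i₁, v imin, ⟨i₁, rfl, by omega⟩,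
      (hcore_eq _).mpr (Or.inl ⟨imin, rfl, le_rfl, hab⟩),
      (hav _ _).mpr (Or.inl (by omega)), ?_, ?_⟩
    · have hsub : {z | z ∈ T0 ∧ G.Adj (v i₁) z} ⊆ {v i₂} := by
        rintro z ⟨⟨i3, rfl, h3⟩, hadj⟩
        have hrel := (hav _ _).mp hadj
        simp only [Set.mem_singleton_iff]
        congr 1
        exact Fin.ext (by omega)
      calc {z | z ∈ T0 ∧ G.Adj (v i₁) z}.ncard ≤ ({v i₂} : Set V).ncard :=
            Set.ncard_le_ncard hsub (Set.toFinite _)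
        _ = 1 := Set.ncard_singleton _
    · rintro x' y' ⟨i3, rfl, h3⟩ hy' hadj
      rw [hcore_eq] at hy'
      rcases hy' with ⟨i4, rfl, hb1, hb2⟩ | ⟨j4, rfl, hb1, hb2⟩
      · have hrel := (hav _ _).mp hadj
        constructor
        · congr 1
          exact Fin.ext (by omega)
        · congr 1
          exact Fin.ext (by omega)
      · exfalso
        have := hbounds _ _ hadj
        omega
  have hedge1 : T1.Nonempty → ∃ x y, x ∈ T1 ∧ y ∈ core G ∧ G.Adj x y ∧
      {z | z ∈ T1 ∧ G.Adj x z}.ncard ≤ 1 ∧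
      ∀ x' y', x' ∈ T1 → y' ∈ core G → G.Adj x' y' → x' = x ∧ y' = y := by
    rintro ⟨x, i1, rfl, h1⟩
    have hb1k : (imax:ℕ)+1 < k := by have := i1.isLt; omega
    set i₁ : Fin k := ⟨(imax:ℕ)+1, hb1k⟩ with hi₁
    have e1 : (i₁:ℕ) = (imax:ℕ)+1 := rfl
    set z0 : V := if h : (imax:ℕ)+2 < k then v ⟨(imax:ℕ)+2, h⟩ else v i₁ with hz0
    refine ⟨v i₁, v imax, ⟨i₁, rfl, by omega⟩,
      (hcore_eq _).mpr (Or.inl ⟨imax, rfl, hab, le_rfl⟩),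
      (hav _ _).mpr (Or.inr (by omega)), ?_, ?_⟩
    · have hsub : {z | z ∈ T1 ∧ G.Adj (v i₁) z} ⊆ {z0} := by
        rintro z ⟨⟨i3, rfl, h3⟩, hadj⟩
        have hrel := (hav _ _).mp hadj
        have hlt : (imax:ℕ)+2 < k := by have := i3.isLt; omega
        rw [Set.mem_singleton_iff, hz0, dif_pos hlt]
        congr 1
        refine Fin.ext ?_
        show (i3:ℕ) = (imax:ℕ)+2
        omega
      calc {z | z ∈ T1 ∧ G.Adj (v i₁) z}.ncard ≤ ({z0} : Set V).ncard :=
            Set.ncard_le_ncard hsub (Set.toFinite _)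
        _ = 1 := Set.ncard_singleton _
    · rintro x' y' ⟨i3, rfl, h3⟩ hy' hadj
      rw [hcore_eq] at hy'
      rcases hy' with ⟨i4, rfl, hb1, hb2⟩ | ⟨j4, rfl, hb1, hb2⟩
      · have hrel := (hav _ _).mp hadj
        constructor
        · congr 1
          exact Fin.ext (by omega)
        · congr 1
          exact Fin.ext (by omega)
      · exfalso
        have := hbounds _ _ hadj
        omega
  have hedge2 : T2.Nonempty → ∃ x y, x ∈ T2 ∧ y ∈ core G ∧ G.Adj x y ∧
      {z | z ∈ T2 ∧ G.Adj x z}.ncard ≤ 1 ∧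
      ∀ x' y', x' ∈ T2 → y' ∈ core G → G.Adj x' y' → x' = x ∧ y' = y := by
    rintro ⟨x, j1, rfl, h1⟩
    have ha1 : 1 ≤ (jmin:ℕ) := by omega
    set j₁ : Fin l := ⟨(jmin:ℕ)-1, by omega⟩ with hj₁
    set j₂ : Fin l := ⟨(jmin:ℕ)-2, by omega⟩ with hj₂
    have e1 : (j₁:ℕ) = (jmin:ℕ)-1 := rfl
    have e2 : (j₂:ℕ) = (jmin:ℕ)-2 := rfl
    refine ⟨u j₁, u jmin, ⟨j₁, rfl, by omega⟩,
      (hcore_eq _).mpr (Or.inr ⟨jmin, rfl, le_rfl, hcd⟩),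
      (hau _ _).mpr (Or.inl (by omega)), ?_, ?_⟩
    · have hsub : {z | z ∈ T2 ∧ G.Adj (u j₁) z} ⊆ {u j₂} := by
        rintro z ⟨⟨j3, rfl, h3⟩, hadj⟩
        have hrel := (hau _ _).mp hadj
        simp only [Set.mem_singleton_iff]
        congr 1
        exact Fin.ext (by omega)
      calc {z | z ∈ T2 ∧ G.Adj (u j₁) z}.ncard ≤ ({u j₂} : Set V).ncard :=
            Set.ncard_le_ncard hsub (Set.toFinite _)
        _ = 1 := Set.ncard_singleton _
    · rintro x' y' ⟨j3, rfl, h3⟩ hy' hadj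
      rw [hcore_eq] at hy'
      rcases hy' with ⟨i4, rfl, hb1, hb2⟩ | ⟨j4, rfl, hb1, hb2⟩
      · exfalso
        have := hbounds _ _ hadj.symm
        omega
      · have hrel := (hau _ _).mp hadj
        constructor
        · congr 1
          exact Fin.ext (by omega)
        · congr 1
          exact Fin.ext (by omega)
  have hedge3 : T3.Nonempty → ∃ x y, x ∈ T3 ∧ y ∈ core G ∧ G.Adj x y ∧
      {z | z ∈ T3 ∧ G.Adj x z}.ncard ≤ 1 ∧
      ∀ x' y', x' ∈ T3 → y' ∈ core G → G.Adj x' y' → x' = x ∧ y' = y := by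
    rintro ⟨x, j1, rfl, h1⟩
    have hb1l : (jmax:ℕ)+1 < l := by have := j1.isLt; omega
    set j₁ : Fin l := ⟨(jmax:ℕ)+1, hb1l⟩ with hj₁
    have e1 : (j₁:ℕ) = (jmax:ℕ)+1 := rfl
    set z0 : V := if h : (jmax:ℕ)+2 < l then u ⟨(jmax:ℕ)+2, h⟩ else u j₁ with hz0
    refine ⟨u j₁, u jmax, ⟨j₁, rfl, by omega⟩,
      (hcore_eq _).mpr (Or.inr ⟨jmax, rfl, hcd, le_rfl⟩),
      (hau _ _).mpr (Or.inr (by omega)), ?_, ?_⟩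
    · have hsub : {z | z ∈ T3 ∧ G.Adj (u j₁) z} ⊆ {z0} := by
        rintro z ⟨⟨j3, rfl, h3⟩, hadj⟩
        have hrel := (hau _ _).mp hadj
        have hlt : (jmax:ℕ)+2 < l := by have := j3.isLt; omega
        rw [Set.mem_singleton_iff, hz0, dif_pos hlt]
        congr 1
        refine Fin.ext ?_
        show (j3:ℕ) = (jmax:ℕ)+2
        omega
      calc {z | z ∈ T3 ∧ G.Adj (u j₁) z}.ncard ≤ ({z0} : Set V).ncard :=
            Set.ncard_le_ncard hsub (Set.toFinite _)
        _ = 1 := Set.ncard_singleton _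
    · rintro x' y' ⟨j3, rfl, h3⟩ hy' hadj
      rw [hcore_eq] at hy'
      rcases hy' with ⟨i4, rfl, hb1, hb2⟩ | ⟨j4, rfl, hb1, hb2⟩
      · exfalso
        have := hbounds _ _ hadj.symm
        omega
      · have hrel := (hau _ _).mp hadj
        constructor
        · congr 1
          exact Fin.ext (by omega)
        · congr 1
          exact Fin.ext (by omega)
  have halledge : ∀ s : Fin 4, (T s).Nonempty → ∃ x y, x ∈ T s ∧ y ∈ core G ∧ G.Adj x y ∧
      {z | z ∈ T s ∧ G.Adj x z}.ncard ≤ 1 ∧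
      ∀ x' y', x' ∈ T s → y' ∈ core G → G.Adj x' y' → x' = x ∧ y' = y := by
    intro s
    fin_cases s
    · exact hedge0
    · exact hedge1
    · exact hedge2
    · exact hedge3
  -- final assembly
  set P4 : Fin 4 → Prop := fun s => (T s).Nonempty with hP4
  set n := Fintype.card {s : Fin 4 // P4 s} with hn
  have e : Fin n ≃ {s : Fin 4 // P4 s} := (Fintype.equivFin {s : Fin 4 // P4 s}).symm
  refine ⟨n, ?_, fun m => T (e m).1, fun m => (e m).2, ?_, ?_, fun m => hallpath _, ?_, ?_⟩
  · rw [hn]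
    calc Fintype.card {s : Fin 4 // P4 s} ≤ Fintype.card (Fin 4) := Fintype.card_subtype_le _
      _ = 4 := Fintype.card_fin 4
  · intro m m' hne'
    refine hTdisj _ _ ?_
    intro hs
    exact hne' (e.injective (Subtype.ext hs))
  · ext x
    simp only [Set.mem_iUnion, Set.mem_compl_iff]
    constructor
    · rintro ⟨m, hm⟩
      rw [hnotcore]
      exact hTmem x _ hm
    · intro hc
      have h4 := (hnotcore x).mp hc
      have hex : ∃ s : Fin 4, x ∈ T s := by
        rcases h4 with h | h | h | h
        · exact ⟨0, h⟩
        · exact ⟨1, h⟩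
        · exact ⟨2, h⟩
        · exact ⟨3, h⟩
      obtain ⟨s, hs⟩ := hex
      refine ⟨e.symm ⟨s, ⟨x, hs⟩⟩, ?_⟩
      rw [Equiv.apply_symm_apply]
      exact hs
  · intro m m' hne' x hxs y hyt
    refine hTnadj _ _ ?_ x hxs y hyt
    intro hs
    exact hne' (e.injective (Subtype.ext hs))
  · intro m
    exact halledge (e m).1 (e m).2
end

section
/- If G is an outer-planar graph whose core G[R] has two distinct Hamiltonian cycles, then G contains a K₄ minor; hence if G is outer-planar (contains no K₄ minor), the Hamiltonian cycle of G[R] bounding the outer face is unique. -/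
/-- `H` is a minor of `G`. -/
def HasMinor {V W : Type*} (G : SimpleGraph V) (H : SimpleGraph W) : Prop :=
  ∃ f : V → Option W,
    (∀ w : W, ∃ v, f v = some w) ∧
    (∀ w : W, (G.induce {v | f v = some w}).Connected) ∧
    (∀ w₁ w₂ : W, H.Adj w₁ w₂ → ∃ v₁ v₂, f v₁ = some w₁ ∧ f v₂ = some w₂ ∧ G.Adj v₁ v₂)

lemma aux_conn {V : Type*} {n : ℕ} (G : SimpleGraph V) (d : Fin n → V)
    (hadj : ∀ i j : Fin n, (i : ℕ) + 1 = (j : ℕ) → G.Adj (d i) (d j))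
    (l r : ℕ) (hlr : l ≤ r) (hr : r < n) :
    (G.induce (d '' {i : Fin n | l ≤ (i : ℕ) ∧ (i : ℕ) ≤ r})).Connected := by
  set S := d '' {i : Fin n | l ≤ (i : ℕ) ∧ (i : ℕ) ≤ r} with hS
  have hl : l < n := lt_of_le_of_lt hlr hr
  have hbase : d ⟨l, hl⟩ ∈ S := ⟨⟨l, hl⟩, ⟨le_refl l, hlr⟩, rfl⟩
  have key : ∀ m : ℕ, ∀ i : Fin n, (i : ℕ) = l + m → l + m ≤ r →
      ∀ (h2 : d i ∈ S),
      (G.induce S).Reachable ⟨d ⟨l, hl⟩, hbase⟩ ⟨d i, h2⟩ := by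
    intro m
    induction m with
    | zero =>
      intro i hi _ h2
      have : i = ⟨l, hl⟩ := Fin.ext (by simp only [Fin.val_mk]; omega)
      subst this
      exact SimpleGraph.Reachable.refl _
    | succ m ih =>
      intro i hi hle h2
      have hjlt : l + m < n := by omega
      have hmem : d ⟨l + m, hjlt⟩ ∈ S :=
        ⟨⟨l + m, hjlt⟩, ⟨by simp only [Fin.val_mk]; omega, by simp only [Fin.val_mk]; omega⟩, rfl⟩
      have hreach := ih ⟨l + m, hjlt⟩ (by simp only [Fin.val_mk]) (by omega) hmem
      have hadj2 : (G.induce S).Adj ⟨d ⟨l + m, hjlt⟩, hmem⟩ ⟨d i, h2⟩ :=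
        hadj _ _ (by simp only [Fin.val_mk]; omega)
      exact hreach.trans hadj2.reachable
  rw [SimpleGraph.connected_iff]
  constructor
  · rintro ⟨x, i, hi, rfl⟩ ⟨y, j, hj, rfl⟩
    simp only [Set.mem_setOf_eq] at hi hj
    have h1 := key ((i : ℕ) - l) i (by omega) (by omega) ⟨i, hi, rfl⟩
    have h2 := key ((j : ℕ) - l) j (by omega) (by omega) ⟨j, hj, rfl⟩
    exact h1.symm.trans h2
  · exact ⟨_, hbase⟩

lemma aux_main {V : Type*} {n : ℕ} [NeZero n] (hn : 3 ≤ n) (G : SimpleGraph V)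
    (c₁ c₂ : Fin n → V)
    (hbij₁ : Function.Bijective c₁) (hbij₂ : Function.Bijective c₂)
    (hc1 : ∀ i : Fin n, G.Adj (c₁ i) (c₁ (i + 1)))
    (hc2 : ∀ i : Fin n, G.Adj (c₂ i) (c₂ (i + 1)))
    (k : Fin n)
    (hnotE : ∀ i : Fin n, s(c₁ i, c₁ (i + 1)) ≠ s(c₂ k, c₂ (k + 1))) :
    HasMinor G (⊤ : SimpleGraph (Fin 4)) := by
  classical
  have hsucc : ∀ i : Fin n, ((i + 1 : Fin n) : ℕ) = ((i : ℕ) + 1) % n := by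
    intro i
    simp [Fin.add_def, Nat.mod_eq_of_lt (show 1 < n by omega)]
  have hone : ((1 : Fin n) : ℕ) = 1 := by
    rw [show (1 : Fin n) = 0 + 1 by rw [zero_add], hsucc]
    simp [Nat.mod_eq_of_lt (show 1 < n by omega)]
  set a := c₂ k with ha
  set b := c₂ (k + 1) with hb
  have hab : G.Adj a b := hc2 k
  -- rotated first cycle
  set E1 : Fin n ≃ V := Equiv.ofBijective c₁ hbij₁ with hE1
  set E2 : Fin n ≃ V := Equiv.ofBijective c₂ hbij₂ with hE2
  set dE : Fin n ≃ V := (Equiv.addLeft (E1.symm a)).trans E1 with hdE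
  set d : Fin n → V := fun i => dE i with hd
  have hd_eq : ∀ i, d i = c₁ (E1.symm a + i) := fun i => rfl
  have hc1a : c₁ (E1.symm a) = a := E1.apply_symm_apply a
  have hd0 : d 0 = a := by rw [hd_eq, add_zero]; exact hc1a
  have hdadj : ∀ i : Fin n, G.Adj (d i) (d (i + 1))  := by
    intro i
    rw [hd_eq, hd_eq, ← add_assoc]
    exact hc1 (E1.symm a + i)
  have hdadj' : ∀ i j : Fin n, (i : ℕ) + 1 = (j : ℕ) → G.Adj (d i) (d j) := by
    intro i j hij
    have hjlt := j.isLt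
    have : j = i + 1 := Fin.ext (by rw [hsucc, Nat.mod_eq_of_lt (by omega)]; omega)
    rw [this]; exact hdadj i
  -- rotated second cycle
  set eE : Fin n ≃ V := (Equiv.addLeft k).trans E2 with heE
  set e : Fin n → V := fun i => eE i with he
  have he_eq : ∀ i, e i = c₂ (k + i) := fun i => rfl
  have he0 : e 0 = a := by rw [he_eq, add_zero]
  have he1 : e 1 = b := by rw [he_eq]
  have headj : ∀ i : Fin n, G.Adj (e i) (e (i + 1)) := by
    intro i
    rw [he_eq, he_eq, ← add_assoc]
    exact hc2 (k + i)
  have heinj : Function.Injective e := fun i j h => eE.injective h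
  -- position function
  set P : V → Fin n := fun x => dE.symm x with hP
  have hPd : ∀ i, P (d i) = i := fun i => dE.symm_apply_apply i
  have hdP : ∀ x, d (P x) = x := fun x => dE.apply_symm_apply x
  have hPa : P a = 0 := by rw [← hd0, hPd]
  set t : Fin n := P b with ht
  have hdt : d t = b := hdP b
  set s : ℕ := (t : ℕ) with hs
  have hslt : s < n := t.isLt
  have ht0 : t ≠ 0 := by
    intro h
    have : b = a := by rw [← hdt, h, hd0]
    exact hab.ne this.symm
  have ht1 : t ≠ 1 := by
    intro h
    apply hnotE (E1.symm a)
    have h2 : c₁ (E1.symm a + 1) = b := by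
      rw [← hd_eq 1, ← h, hdt]
    rw [hc1a, h2]
  have hs2 : 2 ≤ s := by
    have h0 : s ≠ 0 := fun h => ht0 (Fin.ext (by rw [← hs, h]; rfl))
    have h1 : s ≠ 1 := fun h => ht1 (Fin.ext (by rw [hone, ← hs]; exact h))
    omega
  have hsn : s + 2 ≤ n := by
    have : s ≠ n - 1 := by
      intro h
      have ht1' : t + 1 = 0 := Fin.ext (by
        rw [hsucc, show (t : ℕ) + 1 = n by omega, Nat.mod_self, Fin.val_zero])
      apply hnotE (E1.symm a + t)
      have hm0 : c₁ (E1.symm a + t) = b := by rw [← hd_eq, hdt]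
      have hm1 : c₁ (E1.symm a + t + 1) = a := by
        rw [add_assoc, ht1', add_zero]; exact hc1a
      rw [hm0, hm1]
      exact Sym2.eq_swap
    omega
  -- classification of vertices
  have hclass : ∀ x : V, x ≠ a → x ≠ b →
      (1 ≤ (P x : ℕ) ∧ (P x : ℕ) < s) ∨ (s < (P x : ℕ)) := by
    intro x hxa hxb
    have h0 : P x ≠ 0 := fun h => hxa (by rw [← hdP x, h, hd0])
    have hbne : P x ≠ t := fun h => hxb (by rw [← hdP x, h, hdt])
    have h0' : (P x : ℕ) ≠ 0 := fun h => h0 (Fin.ext (by rw [h]; rfl))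
    have hb' : (P x : ℕ) ≠ s := fun h => hbne (Fin.ext h)
    omega
  -- Step B : a crossing edge
  have stepB : ∃ u v : V, G.Adj u v ∧ (1 ≤ (P u : ℕ) ∧ (P u : ℕ) < s) ∧ s < (P v : ℕ) := by
    by_contra hcon
    push_neg at hcon
    set Imem : V → Prop := fun x => 1 ≤ (P x : ℕ) ∧ (P x : ℕ) < s with hImem
    have habs : ∀ x y : V, G.Adj x y → Imem y → x ≠ a → x ≠ b → Imem x := by
      intro x y hadj hIy hxa hxb
      rcases hclass x hxa hxb with h | h
      · exact h
      · exact absurd h (by have h2 := hcon y x hadj.symm hIy; omega)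
    -- the vertex d 1 lies in the interior
    set u₁ : V := d 1 with hu₁
    have hPu₁ : (P u₁ : ℕ) = 1 := by rw [hu₁, hPd, hone]
    have hIu₁ : Imem u₁ := by
      simp only [hImem]
      exact ⟨by omega, by omega⟩
    have hu₁a : u₁ ≠ a := by
      intro h
      have : (1 : Fin n) = 0 := by
        have := hPa; rw [← h, hu₁, hPd] at this; exact this
      have := congrArg Fin.val this
      rw [hone, Fin.val_zero] at this; omega
    have hu₁b : u₁ ≠ b := by
      intro h
      have : (1 : Fin n) = t := by rw [ht, ← h, hu₁, hPd]
      have := congrArg Fin.val this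
      rw [hone] at this; omega
    set jI : Fin n := eE.symm u₁ with hjI
    have heI : e jI = u₁ := eE.apply_symm_apply u₁
    have hjI0 : (jI : ℕ) ≠ 0 := by
      intro h
      have : jI = 0 := Fin.ext (by rw [h]; rfl)
      exact hu₁a (by rw [← heI, this, he0])
    have hjI1 : (jI : ℕ) ≠ 1 := by
      intro h
      have : jI = 1 := Fin.ext (by rw [h, hone])
      exact hu₁b (by rw [← heI, this, he1])
    have hjIlt := jI.isLt
    -- e at a valid index differs from a and b
    have hea : ∀ (m : ℕ) (hm : m < n), 2 ≤ m → e ⟨m, hm⟩ ≠ a := by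
      intro m hm h2 h
      rw [← he0] at h
      have := congrArg Fin.val (heinj h)
      simp only [Fin.val_mk, Fin.val_zero] at this; omega
    have heb : ∀ (m : ℕ) (hm : m < n), 2 ≤ m → e ⟨m, hm⟩ ≠ b := by
      intro m hm h2 h
      rw [← he1] at h
      have := congrArg Fin.val (heinj h)
      simp only [Fin.val_mk, hone] at this; omega
    have headj' : ∀ (m : ℕ) (hm : m < n) (hm1 : m + 1 < n),
        G.Adj (e ⟨m, hm⟩) (e ⟨m + 1, hm1⟩) := by
      intro m hm hm1
      have heq : (⟨m, hm⟩ : Fin n) + 1 = ⟨m + 1, hm1⟩ :=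
        Fin.ext (by simp only [hsucc, Fin.val_mk]; exact Nat.mod_eq_of_lt hm1)
      have := headj ⟨m, hm⟩
      rwa [heq] at this
    -- upward induction
    have up : ∀ m : ℕ, ∀ (hm : (jI : ℕ) + m < n), Imem (e ⟨(jI : ℕ) + m, hm⟩) := by
      intro m
      induction m with
      | zero =>
        intro hm
        have : (⟨(jI : ℕ) + 0, hm⟩ : Fin n) = jI := Fin.ext (by simp)
        rw [this, heI]; exact hIu₁
      | succ m ih =>
        intro hm
        have hm' : (jI : ℕ) + m < n := by omega
        have hprev := ih hm'
        have hadj := headj' ((jI : ℕ) + m) hm' (by omega)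
        have h2 : 2 ≤ (jI : ℕ) + m + 1 := by omega
        have := habs (e ⟨(jI : ℕ) + m + 1, by omega⟩) (e ⟨(jI : ℕ) + m, hm'⟩)
          hadj.symm hprev (hea _ _ h2) (heb _ _ h2)
        convert this using 3 <;> omega
      -- downward induction
    have down : ∀ m : ℕ, ∀ (j : ℕ) (hj : j < n), j = (jI : ℕ) - m → 2 ≤ j →
        Imem (e ⟨j, hj⟩) := by
      intro m
      induction m with
      | zero =>
        intro j hj hje h2
        have : (⟨j, hj⟩ : Fin n) = jI := Fin.ext (by simp only [Fin.val_mk]; omega)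
        rw [this, heI]; exact hIu₁
      | succ m ih =>
        intro j hj hje h2
        have hj1 : j + 1 < n := by omega
        have hnext := ih (j + 1) hj1 (by omega) (by omega)
        have hadj := headj' j hj hj1
        exact habs _ _ hadj hnext (hea _ _ h2) (heb _ _ h2)
    -- the outside vertex
    have hno : n - 1 < n := by omega
    set o : V := d ⟨n - 1, hno⟩ with ho
    have hPo : (P o : ℕ) = n - 1 := by rw [ho, hPd]
    have hoa : o ≠ a := by
      intro h; rw [h, hPa, Fin.val_zero] at hPo; omega
    have hob : o ≠ b := by
      intro h; rw [h, ← ht, ← hs] at hPo; omega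
    set jo : Fin n := eE.symm o with hjo
    have heo : e jo = o := eE.apply_symm_apply o
    have hjo0 : (jo : ℕ) ≠ 0 := by
      intro h
      have : jo = 0 := Fin.ext (by rw [h]; rfl)
      exact hoa (by rw [← heo, this, he0])
    have hjo1 : (jo : ℕ) ≠ 1 := by
      intro h
      have : jo = 1 := Fin.ext (by rw [h, hone])
      exact hob (by rw [← heo, this, he1])
    have hjolt := jo.isLt
    have hIo : Imem o := by
      rcases le_or_gt (jo : ℕ) (jI : ℕ) with h | h
      · have := down ((jI : ℕ) - (jo : ℕ)) (jo : ℕ) jo.isLt (by omega) (by omega)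
        rwa [show (⟨(jo : ℕ), jo.isLt⟩ : Fin n) = jo from Fin.ext rfl, heo] at this
      · have := up ((jo : ℕ) - (jI : ℕ)) (by omega)
        rwa [show (⟨(jI : ℕ) + ((jo : ℕ) - (jI : ℕ)), by omega⟩ : Fin n) = jo from
          Fin.ext (by simp only [Fin.val_mk]; omega), heo] at this
    rw [hImem] at hIo
    omega
  obtain ⟨u, v, huv, ⟨hp1, hps⟩, hq⟩ := stepB
  set p : ℕ := (P u : ℕ) with hp
  set q : ℕ := (P v : ℕ) with hqdef
  have hqn : q < n := (P v).isLt
  have hdu : d (P u) = u := hdP u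
  have hdv : d (P v) = v := hdP v
  -- the minor map
  set g : ℕ → Fin 4 := fun m => if m < p then 0 else if m < s then 1 else if m < q then 2 else 3
    with hg
  set f : V → Option (Fin 4) := fun x => some (g (P x : ℕ)) with hf
  have hfa : f a = some 0 := by
    simp only [hf, hg, hPa, Fin.val_zero, Option.some.injEq]
    rw [if_pos (by omega)]
  have hfu : f u = some 1 := by
    simp only [hf, hg, ← hp, Option.some.injEq]
    rw [if_neg (by omega), if_pos (by omega)]
  have hfb : f b = some 2 := by
    simp only [hf, hg, ← ht, ← hs, Option.some.injEq]
    rw [if_neg (by omega), if_neg (by omega), if_pos (by omega)]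
  have hfv : f v = some 3 := by
    simp only [hf, hg, ← hqdef, Option.some.injEq]
    rw [if_neg (by omega), if_neg (by omega), if_neg (by omega)]
  have hfd : ∀ (m : ℕ) (hm : m < n), f (d ⟨m, hm⟩) = some (g m) := by
    intro m hm
    simp only [hf, hPd, Fin.val_mk]
  have hset : ∀ (w : Fin 4) (l r : ℕ), r < n →
      (∀ m : ℕ, m < n → (g m = w ↔ l ≤ m ∧ m ≤ r)) →
      {x | f x = some w} = d '' {i : Fin n | l ≤ (i : ℕ) ∧ (i : ℕ) ≤ r} := by
    intro w l r hr hspec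
    ext x
    simp only [Set.mem_setOf_eq, hf, Option.some.injEq]
    constructor
    · intro hgx
      exact ⟨P x, (hspec _ (P x).isLt).mp hgx, hdP x⟩
    · rintro ⟨i, hi, rfl⟩
      rw [hPd]
      exact (hspec _ i.isLt).mpr hi
  have hconn4 : ∀ (w : Fin 4) (l r : ℕ), l ≤ r → r < n →
      (∀ m : ℕ, m < n → (g m = w ↔ l ≤ m ∧ m ≤ r)) →
      (G.induce {x | f x = some w}).Connected := by
    intro w l r hlr hr hspec
    rw [hset w l r hr hspec]
    exact aux_conn G d hdadj' l r hlr hr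
  refine ⟨f, ?_, ?_, ?_⟩
  · intro w
    fin_cases w
    · exact ⟨a, hfa⟩
    · exact ⟨u, hfu⟩
    · exact ⟨b, hfb⟩
    · exact ⟨v, hfv⟩
  · intro w
    fin_cases w
    · exact hconn4 0 0 (p - 1) (by omega) (by omega)
        (by intro m hm; simp only [hg]; split_ifs <;> simp <;> omega)
    · exact hconn4 1 p (s - 1) (by omega) (by omega)
        (by intro m hm; simp only [hg]; split_ifs <;> simp <;> omega)
    · exact hconn4 2 s (q - 1) (by omega) (by omega)
        (by intro m hm; simp only [hg]; split_ifs <;> simp <;> omega)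
    · exact hconn4 3 q (n - 1) (by omega) (by omega)
        (by intro m hm; simp only [hg]; split_ifs <;> simp <;> omega)
  · have E01 : ∃ v₁ v₂, f v₁ = some 0 ∧ f v₂ = some 1 ∧ G.Adj v₁ v₂ := by
      refine ⟨d ⟨p - 1, by omega⟩, u, ?_, hfu, ?_⟩
      · rw [hfd]; simp only [hg]; rw [if_pos (by omega)]
      · have := hdadj' ⟨p - 1, by omega⟩ (P u) (by simp only [Fin.val_mk, ← hp]; omega)
        rwa [hdu] at this
    have E12 : ∃ v₁ v₂, f v₁ = some 1 ∧ f v₂ = some 2 ∧ G.Adj v₁ v₂ := by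
      refine ⟨d ⟨s - 1, by omega⟩, b, ?_, hfb, ?_⟩
      · rw [hfd]; simp only [hg]; rw [if_neg (by omega), if_pos (by omega)]
      · have := hdadj' ⟨s - 1, by omega⟩ t (by simp only [Fin.val_mk, ← hs]; omega)
        rwa [hdt] at this
    have E23 : ∃ v₁ v₂, f v₁ = some 2 ∧ f v₂ = some 3 ∧ G.Adj v₁ v₂ := by
      refine ⟨d ⟨q - 1, by omega⟩, v, ?_, hfv, ?_⟩
      · rw [hfd]; simp only [hg]; rw [if_neg (by omega), if_neg (by omega), if_pos (by omega)]
      · have := hdadj' ⟨q - 1, by omega⟩ (P v) (by simp only [Fin.val_mk, ← hqdef]; omega)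
        rwa [hdv] at this
    have E30 : ∃ v₁ v₂, f v₁ = some 3 ∧ f v₂ = some 0 ∧ G.Adj v₁ v₂ := by
      refine ⟨d ⟨n - 1, by omega⟩, a, ?_, hfa, ?_⟩
      · rw [hfd]; simp only [hg]
        rw [if_neg (by omega), if_neg (by omega), if_neg (by omega)]
      · have h1 : (⟨n - 1, by omega⟩ : Fin n) + 1 = 0 := by
          apply Fin.ext
          rw [hsucc]
          simp only [Fin.val_mk, Fin.val_zero]
          rw [show n - 1 + 1 = n by omega, Nat.mod_self]
        have := hdadj ⟨n - 1, by omega⟩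
        rwa [h1, hd0] at this
    have E02 : ∃ v₁ v₂, f v₁ = some 0 ∧ f v₂ = some 2 ∧ G.Adj v₁ v₂ := ⟨a, b, hfa, hfb, hab⟩
    have E13 : ∃ v₁ v₂, f v₁ = some 1 ∧ f v₂ = some 3 ∧ G.Adj v₁ v₂ := ⟨u, v, hfu, hfv, huv⟩
    have hswap : ∀ {w₁ w₂ : Fin 4},
        (∃ v₁ v₂, f v₁ = some w₁ ∧ f v₂ = some w₂ ∧ G.Adj v₁ v₂) →
        (∃ v₁ v₂, f v₁ = some w₂ ∧ f v₂ = some w₁ ∧ G.Adj v₁ v₂) := by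
      rintro w₁ w₂ ⟨v₁, v₂, h1, h2, h3⟩
      exact ⟨v₂, v₁, h2, h1, h3.symm⟩
    intro w₁ w₂ hne
    fin_cases w₁ <;> fin_cases w₂
    · simp at hne
    · exact E01
    · exact E02
    · exact hswap E30
    · exact hswap E01
    · simp at hne
    · exact E12
    · exact E13
    · exact hswap E02
    · exact hswap E12
    · simp at hne
    · exact E23
    · exact E30
    · exact hswap E13
    · exact hswap E23
    · simp at hne

/-- A 2-connected graph (at least three vertices, connected, no cut vertex)
with two distinct Hamiltonian cycles contains a K₄ minor.  (Hence the
Hamiltonian cycle of the core of an outer-planar graph bounding the outer face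
is unique.) -/
theorem stmt_12 {V : Type*} [Fintype V] (G : SimpleGraph V)
    (hcard : 3 ≤ Fintype.card V) (hconn : G.Connected)
    (hnocut : ∀ x : V, (G.induce {y | y ≠ x}).Connected)
    (c₁ c₂ : Fin (Fintype.card V) → V)
    (hbij₁ : Function.Bijective c₁) (hbij₂ : Function.Bijective c₂)
    (hcyc₁ : ∀ i j : Fin (Fintype.card V),
      ((i : ℕ) + 1) % Fintype.card V = (j : ℕ) → G.Adj (c₁ i) (c₁ j))
    (hcyc₂ : ∀ i j : Fin (Fintype.card V),
      ((i : ℕ) + 1) % Fintype.card V = (j : ℕ) → G.Adj (c₂ i) (c₂ j))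
    (hdistinct : ∃ i j : Fin (Fintype.card V),
      ((i : ℕ) + 1) % Fintype.card V = (j : ℕ) ∧
      ¬ ∃ i' j' : Fin (Fintype.card V),
        ((i' : ℕ) + 1) % Fintype.card V = (j' : ℕ) ∧
        s(c₂ i', c₂ j') = s(c₁ i, c₁ j)) :
    HasMinor G (⊤ : SimpleGraph (Fin 4)) := by
  classical
  haveI : NeZero (Fintype.card V) := ⟨by omega⟩
  have hsucc : ∀ i : Fin (Fintype.card V),
      ((i + 1 : Fin (Fintype.card V)) : ℕ) = ((i : ℕ) + 1) % Fintype.card V := by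
    intro i
    simp [Fin.add_def, Nat.mod_eq_of_lt (show 1 < Fintype.card V by omega)]
  have hc1 : ∀ i : Fin (Fintype.card V), G.Adj (c₁ i) (c₁ (i + 1)) :=
    fun i => hcyc₁ i (i + 1) (hsucc i).symm
  have hc2 : ∀ i : Fin (Fintype.card V), G.Adj (c₂ i) (c₂ (i + 1)) :=
    fun i => hcyc₂ i (i + 1) (hsucc i).symm
  -- there is an edge of c₂ which is not an edge of c₁
  have stepA : ∃ k : Fin (Fintype.card V), ∀ i : Fin (Fintype.card V),
      s(c₁ i, c₁ (i + 1)) ≠ s(c₂ k, c₂ (k + 1)) := by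
    obtain ⟨i, j, hij, hne⟩ := hdistinct
    have hj : j = i + 1 := Fin.ext (by rw [hsucc]; exact hij.symm)
    rw [hj] at hne
    by_contra hA
    push_neg at hA
    have hinj : ∀ (c : Fin (Fintype.card V) → V), Function.Bijective c →
        Function.Injective (fun i : Fin (Fintype.card V) => s(c i, c (i + 1))) := by
      intro c hbc x y h
      simp only [Sym2.eq_iff] at h
      rcases h with ⟨h1, h2⟩ | ⟨h1, h2⟩
      · exact hbc.injective h1
      · have e1 : x = y + 1 := hbc.injective h1
        have e2 : x + 1 = y := hbc.injective h2
        have hv1 : (x : ℕ) = ((y : ℕ) + 1) % Fintype.card V := by rw [e1, hsucc]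
        have hv2 : ((x : ℕ) + 1) % Fintype.card V = (y : ℕ) := by rw [← hsucc, e2]
        have hx := x.isLt
        have hy := y.isLt
        exfalso
        rcases Nat.lt_or_ge ((y : ℕ) + 1) (Fintype.card V) with h | h
        · rw [Nat.mod_eq_of_lt h] at hv1
          rcases Nat.lt_or_ge ((x : ℕ) + 1) (Fintype.card V) with h' | h'
          · rw [Nat.mod_eq_of_lt h'] at hv2; omega
          · rw [show (x : ℕ) + 1 = Fintype.card V by omega, Nat.mod_self] at hv2; omega
        · rw [show (y : ℕ) + 1 = Fintype.card V by omega, Nat.mod_self] at hv1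
          rw [Nat.mod_eq_of_lt (by omega)] at hv2
          omega
    set e1 : Finset (Sym2 V) :=
      Finset.image (fun i : Fin (Fintype.card V) => s(c₁ i, c₁ (i + 1))) Finset.univ with he1
    set e2 : Finset (Sym2 V) :=
      Finset.image (fun i : Fin (Fintype.card V) => s(c₂ i, c₂ (i + 1))) Finset.univ with he2
    have hcard1 : e1.card = Fintype.card V := by
      rw [he1, Finset.card_image_of_injective _ (hinj c₁ hbij₁), Finset.card_univ,
        Fintype.card_fin]
    have hcard2 : e2.card = Fintype.card V := by
      rw [he2, Finset.card_image_of_injective _ (hinj c₂ hbij₂), Finset.card_univ,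
        Fintype.card_fin]
    have hsub : e2 ⊆ e1 := by
      intro x hx
      rw [he2, Finset.mem_image] at hx
      obtain ⟨kk, _, rfl⟩ := hx
      obtain ⟨ii, hii⟩ := hA kk
      rw [he1, Finset.mem_image]
      exact ⟨ii, Finset.mem_univ ii, hii⟩
    have heq : e2 = e1 := Finset.eq_of_subset_of_card_le hsub (by rw [hcard1, hcard2])
    have hmem : s(c₁ i, c₁ (i + 1)) ∈ e2 := by
      rw [heq, he1, Finset.mem_image]
      exact ⟨i, Finset.mem_univ i, rfl⟩
    rw [he2, Finset.mem_image] at hmem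
    obtain ⟨k', _, hk'⟩ := hmem
    exact hne ⟨k', k' + 1, (hsucc k').symm, hk'⟩
  obtain ⟨k, hnotE⟩ := stepA
  exact aux_main hcard G c₁ c₂ hbij₁ hbij₂ hc1 hc2 k hnotE
end

section
/- Let G be a graph and G' a graph obtained from G by subdividing one edge. Then the maximum nullity satisfies M(G') = M(G) or M(G') = M(G) + 1. -/
/-- The maximum nullity of a graph `G` on `Fin n`: the largest nullity of a
real symmetric matrix whose off-diagonal zero/nonzero pattern is given by the
adjacency of `G` (diagonal entries are free). -/
noncomputable def maxNullity {n : ℕ} (G : SimpleGraph (Fin n)) : ℕ :=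
  sSup {k | ∃ A : Matrix (Fin n) (Fin n) ℝ, A.IsSymm ∧
    (∀ i j, i ≠ j → (A i j ≠ 0 ↔ G.Adj i j)) ∧ n - A.rank = k}


open Matrix Module

noncomputable def mynull {m : ℕ} (A : Matrix (Fin m) (Fin m) ℝ) : ℕ :=
  Module.finrank ℝ (LinearMap.ker A.mulVecLin)

lemma rank_add_mynull {m : ℕ} (A : Matrix (Fin m) (Fin m) ℝ) :
    A.rank + mynull A = m := by
  have h := LinearMap.finrank_range_add_finrank_ker A.mulVecLin
  rw [Module.finrank_fin_fun] at h
  exact h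

lemma sub_rank_eq_mynull {m : ℕ} (A : Matrix (Fin m) (Fin m) ℝ) :
    m - A.rank = mynull A := by
  have := rank_add_mynull A; omega

lemma myrank_add_le {m k : ℕ} (A B : Matrix (Fin m) (Fin k) ℝ) :
    (A + B).rank ≤ A.rank + B.rank := by
  have h : LinearMap.range (A + B).mulVecLin ≤
      LinearMap.range A.mulVecLin ⊔ LinearMap.range B.mulVecLin := by
    rintro x ⟨y, rfl⟩
    rw [Matrix.mulVecLin_apply, Matrix.add_mulVec]
    exact Submodule.add_mem_sup ⟨y, rfl⟩ ⟨y, rfl⟩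
  calc (A + B).rank ≤ Module.finrank ℝ
        (LinearMap.range A.mulVecLin ⊔ LinearMap.range B.mulVecLin : Submodule ℝ _) :=
        Submodule.finrank_mono h
    _ ≤ _ := Submodule.finrank_add_le_finrank_add_finrank _ _

lemma mynull_ext {n : ℕ} (M : Matrix (Fin (n+1)) (Fin (n+1)) ℝ)
    (hd : M (Fin.last n) (Fin.last n) ≠ 0) :
    mynull (Matrix.of fun i j : Fin n => M i.castSucc j.castSucc
      - M i.castSucc (Fin.last n) * M (Fin.last n) j.castSucc / M (Fin.last n) (Fin.last n))
    = mynull M := by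
  set S : Matrix (Fin n) (Fin n) ℝ := Matrix.of fun i j : Fin n => M i.castSucc j.castSucc
      - M i.castSucc (Fin.last n) * M (Fin.last n) j.castSucc
        / M (Fin.last n) (Fin.last n) with hS
  have mvS : ∀ (x : Fin n → ℝ) (i : Fin n), S.mulVec x i
      = ∑ j : Fin n, (M i.castSucc j.castSucc - M i.castSucc (Fin.last n)
          * M (Fin.last n) j.castSucc / M (Fin.last n) (Fin.last n)) * x j := by
    intro x i; rfl
  have mvM : ∀ (z : Fin (n+1) → ℝ) (i : Fin (n+1)), M.mulVec z i
      = ∑ j : Fin n, M i j.castSucc * z j.castSucc + M i (Fin.last n) * z (Fin.last n) := by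
    intro z i
    show ∑ j, M i j * z j = _
    rw [Fin.sum_univ_castSucc]
  set t : (Fin n → ℝ) → ℝ :=
    fun x => -(∑ j : Fin n, M (Fin.last n) j.castSucc * x j)
      / M (Fin.last n) (Fin.last n) with ht
  have hmul : ∀ (c : ℝ) (x : Fin n → ℝ) (i : Fin (n+1)),
      ∑ j : Fin n, M i j.castSucc * (c * x j) = c * ∑ j : Fin n, M i j.castSucc * x j := by
    intro c x i
    rw [Finset.mul_sum]; apply Finset.sum_congr rfl; intros; ring
  have h1 : ∀ x : Fin n → ℝ, S.mulVec x = 0 → M.mulVec (Fin.snoc x (t x)) = 0 := by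
    intro x hx
    funext i
    induction i using Fin.lastCases with
    | last =>
      rw [mvM]
      simp only [Fin.snoc_last, Fin.snoc_castSucc, Pi.zero_apply, ht]
      field_simp
      ring
    | cast i =>
      rw [mvM]
      simp only [Fin.snoc_last, Fin.snoc_castSucc, Pi.zero_apply, ht]
      have hxi := congrFun hx i
      rw [mvS] at hxi
      simp only [Pi.zero_apply, sub_mul, Finset.sum_sub_distrib, sub_eq_zero] at hxi
      have h2 : ∑ j : Fin n, M i.castSucc (Fin.last n) * M (Fin.last n) j.castSucc
            / M (Fin.last n) (Fin.last n) * x j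
          = M i.castSucc (Fin.last n) / M (Fin.last n) (Fin.last n)
            * ∑ j : Fin n, M (Fin.last n) j.castSucc * x j := by
        rw [Finset.mul_sum]; apply Finset.sum_congr rfl; intros; ring
      rw [hxi, h2]
      field_simp
      ring
  have h2 : ∀ z : Fin (n+1) → ℝ, M.mulVec z = 0 →
      S.mulVec (fun i => z i.castSucc) = 0 := by
    intro z hz
    have hw0 := congrFun hz (Fin.last n)
    rw [mvM] at hw0
    simp only [Pi.zero_apply] at hw0
    funext i
    have hi0 := congrFun hz i.castSucc
    rw [mvM] at hi0
    simp only [Pi.zero_apply] at hi0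
    rw [mvS]
    simp only [Pi.zero_apply, sub_mul, Finset.sum_sub_distrib]
    have h3 : ∑ j : Fin n, M i.castSucc (Fin.last n) * M (Fin.last n) j.castSucc
          / M (Fin.last n) (Fin.last n) * z j.castSucc
        = M i.castSucc (Fin.last n) / M (Fin.last n) (Fin.last n)
          * ∑ j : Fin n, M (Fin.last n) j.castSucc * z j.castSucc := by
      rw [Finset.mul_sum]; apply Finset.sum_congr rfl; intros; ring
    have hs' : ∑ j : Fin n, M (Fin.last n) j.castSucc * z j.castSucc
        = -(M (Fin.last n) (Fin.last n) * z (Fin.last n)) := by linarith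
    have hs2 : ∑ j : Fin n, M i.castSucc j.castSucc * z j.castSucc
        = -(M i.castSucc (Fin.last n) * z (Fin.last n)) := by linarith
    rw [h3, hs', hs2]
    field_simp
    ring
  have h3 : ∀ z : Fin (n+1) → ℝ, M.mulVec z = 0 →
      Fin.snoc (fun i => z i.castSucc) (t fun i => z i.castSucc) = z := by
    intro z hz
    have hw0 := congrFun hz (Fin.last n)
    rw [mvM] at hw0
    simp only [Pi.zero_apply] at hw0
    funext i
    induction i using Fin.lastCases with
    | last =>
      rw [Fin.snoc_last, ht]
      have hs' : ∑ j : Fin n, M (Fin.last n) j.castSucc * z j.castSucc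
          = -(M (Fin.last n) (Fin.last n) * z (Fin.last n)) := by linarith
      simp only [hs']
      field_simp
    | cast i => rw [Fin.snoc_castSucc]
  set F : (Fin n → ℝ) →ₗ[ℝ] (Fin (n+1) → ℝ) :=
    { toFun := fun x => Fin.snoc x (t x)
      map_add' := by
        intro x y
        funext i
        induction i using Fin.lastCases with
        | last =>
          simp only [Pi.add_apply, Fin.snoc_last, ht, mul_add, Finset.sum_add_distrib]
          ring
        | cast i => simp [Fin.snoc_castSucc]
      map_smul' := by
        intro c x
        funext i
        induction i using Fin.lastCases with
        | last =>
          simp only [Pi.smul_apply, Fin.snoc_last, ht, smul_eq_mul, RingHom.id_apply]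
          rw [hmul]
          ring
        | cast i => simp [Fin.snoc_castSucc] } with hF
  set G : (Fin (n+1) → ℝ) →ₗ[ℝ] (Fin n → ℝ) := LinearMap.funLeft ℝ ℝ Fin.castSucc with hG
  have hF' : ∀ x : LinearMap.ker S.mulVecLin,
      F.comp (LinearMap.ker S.mulVecLin).subtype x ∈ LinearMap.ker M.mulVecLin := by
    intro ⟨x, hx⟩
    rw [LinearMap.mem_ker] at hx ⊢
    rw [Matrix.mulVecLin_apply] at hx ⊢
    exact h1 x hx
  have hG' : ∀ z : LinearMap.ker M.mulVecLin,
      G.comp (LinearMap.ker M.mulVecLin).subtype z ∈ LinearMap.ker S.mulVecLin := by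
    intro ⟨z, hz⟩
    rw [LinearMap.mem_ker] at hz ⊢
    rw [Matrix.mulVecLin_apply] at hz ⊢
    exact h2 z hz
  set F' : LinearMap.ker S.mulVecLin →ₗ[ℝ] LinearMap.ker M.mulVecLin :=
    LinearMap.codRestrict _ (F.comp (LinearMap.ker S.mulVecLin).subtype) hF' with hF'd
  set G' : LinearMap.ker M.mulVecLin →ₗ[ℝ] LinearMap.ker S.mulVecLin :=
    LinearMap.codRestrict _ (G.comp (LinearMap.ker M.mulVecLin).subtype) hG' with hG'd
  have e : LinearMap.ker S.mulVecLin ≃ₗ[ℝ] LinearMap.ker M.mulVecLin := by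
    refine LinearEquiv.ofLinear F' G' ?_ ?_
    · ext ⟨z, hz⟩
      have hz' : M.mulVec z = 0 := by
        rw [LinearMap.mem_ker, Matrix.mulVecLin_apply] at hz; exact hz
      exact congrFun (h3 z hz') _
    · ext ⟨x, hx⟩
      simp [hF'd, hG'd, hF, hG, LinearMap.funLeft, Fin.snoc_castSucc]
  rw [mynull, mynull]
  exact e.finrank_eq


/-- The set defining maxNullity, rephrased with mynull. -/
lemma maxNullity_set_eq {n : ℕ} (G : SimpleGraph (Fin n)) :
    {k | ∃ A : Matrix (Fin n) (Fin n) ℝ, A.IsSymm ∧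
      (∀ i j, i ≠ j → (A i j ≠ 0 ↔ G.Adj i j)) ∧ n - A.rank = k}
    = {k | ∃ A : Matrix (Fin n) (Fin n) ℝ, A.IsSymm ∧
      (∀ i j, i ≠ j → (A i j ≠ 0 ↔ G.Adj i j)) ∧ mynull A = k} := by
  ext k
  constructor
  · rintro ⟨A, h1, h2, h3⟩; exact ⟨A, h1, h2, by rw [← sub_rank_eq_mynull]; exact h3⟩
  · rintro ⟨A, h1, h2, h3⟩; exact ⟨A, h1, h2, by rw [sub_rank_eq_mynull]; exact h3⟩

/-- If G' is obtained from G by subdividing the edge uv (with new vertex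
`Fin.last n`), then M(G') = M(G) or M(G') = M(G) + 1. -/
theorem stmt_13 (n : ℕ) (G : SimpleGraph (Fin n)) (u v : Fin n) (huv : G.Adj u v)
    (G' : SimpleGraph (Fin (n + 1)))
    (hold : ∀ i j : Fin n, G'.Adj i.castSucc j.castSucc ↔
      (G.Adj i j ∧ s(i, j) ≠ s(u, v)))
    (hnew : ∀ i : Fin n, G'.Adj (Fin.last n) i.castSucc ↔ (i = u ∨ i = v)) :
    maxNullity G' = maxNullity G ∨ maxNullity G' = maxNullity G + 1 := by
  classical
  have hne : u ≠ v := huv.ne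
  set SG : Set ℕ := {k | ∃ A : Matrix (Fin n) (Fin n) ℝ, A.IsSymm ∧
    (∀ i j, i ≠ j → (A i j ≠ 0 ↔ G.Adj i j)) ∧ mynull A = k} with hSG
  set SG' : Set ℕ := {k | ∃ A : Matrix (Fin (n+1)) (Fin (n+1)) ℝ, A.IsSymm ∧
    (∀ i j, i ≠ j → (A i j ≠ 0 ↔ G'.Adj i j)) ∧ mynull A = k} with hSG'
  have hMG : maxNullity G = sSup SG := by rw [maxNullity, maxNullity_set_eq]
  have hMG' : maxNullity G' = sSup SG' := by rw [maxNullity, maxNullity_set_eq]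
  -- boundedness
  have bddG : BddAbove SG := by
    refine ⟨n, ?_⟩
    rintro k ⟨A, -, -, hk⟩
    have := rank_add_mynull A; omega
  have bddG' : BddAbove SG' := by
    refine ⟨n + 1, ?_⟩
    rintro k ⟨A, -, -, hk⟩
    have := rank_add_mynull A; omega
  -- nonemptiness of SG
  have hneG : SG.Nonempty := by
    refine ⟨mynull (Matrix.of fun i j : Fin n => if G.Adj i j then (1:ℝ) else 0),
      Matrix.of (fun i j : Fin n => if G.Adj i j then (1:ℝ) else 0), ?_, ?_, rfl⟩
    · apply Matrix.ext
      intro i j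
      simp only [Matrix.transpose_apply, Matrix.of_apply]
      rw [G.adj_comm]
    · intro i j _
      by_cases h : G.Adj i j <;> simp [h]
  -- STEP 1 : SG ⊆ SG'
  have step1 : SG ⊆ SG' := by
    rintro k ⟨A, hsymm, hpat, hk⟩
    have hA : ∀ p q, A q p = A p q := fun p q => congrFun (congrFun hsymm p) q
    have ha : A u v ≠ 0 := (hpat u v hne).mpr huv
    set r : Fin n → ℝ := fun i => if i = u then 1 else if i = v then -(A u v) else 0 with hr
    set B : Matrix (Fin n) (Fin n) ℝ := fun i j =>
      if i = j then A i i + r i * r i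
      else if (i = u ∧ j = v) ∨ (i = v ∧ j = u) then 0 else A i j with hB
    set A' : Matrix (Fin (n+1)) (Fin (n+1)) ℝ := fun p q =>
      Fin.lastCases (Fin.lastCases 1 r q)
        (fun i' => Fin.lastCases (r i') (fun j' => B i' j') q) p with hA'
    have hA'll : A' (Fin.last n) (Fin.last n) = 1 := by simp [hA']
    have hA'lc : ∀ j : Fin n, A' (Fin.last n) j.castSucc = r j := by intro j; simp [hA']
    have hA'cl : ∀ i : Fin n, A' i.castSucc (Fin.last n) = r i := by intro i; simp [hA']
    have hA'cc : ∀ i j : Fin n, A' i.castSucc j.castSucc = B i j := by intro i j; simp [hA']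
    have hBsymm : ∀ i j, B j i = B i j := by
      intro i j
      rcases eq_or_ne i j with rfl | hij
      · rfl
      · simp only [hB, if_neg hij, if_neg (Ne.symm hij)]
        have hcc : ((j = u ∧ i = v) ∨ (j = v ∧ i = u)) ↔ ((i = u ∧ j = v) ∨ (i = v ∧ j = u)) := by
          tauto
        rw [if_congr hcc rfl rfl, hA i j]
    -- symmetry of A'
    have hsymm' : A'.IsSymm := by
      apply Matrix.ext
      intro p q
      show A' q p = A' p q
      induction p using Fin.lastCases with
      | last =>
        induction q using Fin.lastCases with
        | last => rfl
        | cast j => rw [hA'lc, hA'cl]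
      | cast i =>
        induction q using Fin.lastCases with
        | last => rw [hA'lc, hA'cl]
        | cast j => rw [hA'cc, hA'cc, hBsymm]
    -- pattern of A'
    have hpat' : ∀ p q, p ≠ q → (A' p q ≠ 0 ↔ G'.Adj p q) := by
      have hrne : ∀ i : Fin n, (r i ≠ 0 ↔ i = u ∨ i = v) := by
        intro i
        by_cases hiu : i = u
        · simp [hr, hiu]
        · by_cases hiv : i = v <;> simp [hr, hiu, hiv, ha, Ne.symm hne]
      intro p q hpq
      induction p using Fin.lastCases with
      | last =>
        induction q using Fin.lastCases with
        | last => exact absurd rfl hpq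
        | cast j => rw [hA'lc, hnew, hrne]
      | cast i =>
        induction q using Fin.lastCases with
        | last =>
          rw [hA'cl, G'.adj_comm, hnew, hrne]
        | cast j =>
          have hij : i ≠ j := fun h => hpq (by rw [h])
          rw [hA'cc, hold]
          simp only [hB, if_neg hij]
          by_cases hc : (i = u ∧ j = v) ∨ (i = v ∧ j = u)
          · have hs : s(i, j) = s(u, v) := Sym2.eq_iff.mpr hc
            simp [hc, hs]
          · have hs : s(i, j) ≠ s(u, v) := fun h => hc (Sym2.eq_iff.mp h)
            simp [hc, hs, hpat i j hij]
    -- the Schur complement of A' is exactly A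
    have key : (Matrix.of fun i j : Fin n => A' i.castSucc j.castSucc
        - A' i.castSucc (Fin.last n) * A' (Fin.last n) j.castSucc
          / A' (Fin.last n) (Fin.last n)) = A := by
      apply Matrix.ext
      intro i j
      rw [Matrix.of_apply, hA'cc, hA'cl, hA'lc, hA'll, div_one]
      rcases eq_or_ne i j with rfl | hij
      · simp [hB]
      · simp only [hB, if_neg hij]
        have hvu : A v u = A u v := hA u v
        by_cases hiu : i = u
        · by_cases hjv : j = v
          · simp [hr, hiu, hjv, hne, Ne.symm hne]
          · have hju : j ≠ u := fun h => hij (hiu.trans h.symm)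
            simp [hr, hiu, hju, hjv, hne, Ne.symm hne]
        · by_cases hiv : i = v
          · by_cases hju : j = u
            · simp [hr, hiu, hiv, hju, hne, Ne.symm hne, hvu]
            · have hjv : j ≠ v := fun h => hij (hiv.trans h.symm)
              simp [hr, hiu, hiv, hju, hjv, hne, Ne.symm hne]
          · simp [hr, hiu, hiv]
    have hnull : mynull A' = mynull A := by
      rw [← key]
      exact (mynull_ext A' (by rw [hA'll]; norm_num)).symm
    exact ⟨A', hsymm', hpat', by rw [hnull, hk]⟩
  -- STEP 2 : every k ∈ SG' is ≤ some element of SG plus one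
  have step2 : ∀ k ∈ SG', ∃ k' ∈ SG, k ≤ k' + 1 := by
    rintro k ⟨A', hsymm', hpat', hk⟩
    have hA' : ∀ p q, A' q p = A' p q := fun p q => congrFun (congrFun hsymm' p) q
    set d : ℝ := if A' (Fin.last n) (Fin.last n) = 0 then 1 else A' (Fin.last n) (Fin.last n)
      with hd
    have hd0 : d ≠ 0 := by
      rw [hd]; split <;> simp_all
    set A'' : Matrix (Fin (n+1)) (Fin (n+1)) ℝ := fun p q =>
      if p = Fin.last n ∧ q = Fin.last n then d else A' p q with hA''
    have hA''ll : A'' (Fin.last n) (Fin.last n) = d := by simp [hA'']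
    have hA''cc : ∀ i j : Fin n, A'' i.castSucc j.castSucc = A' i.castSucc j.castSucc := by
      intro i j
      simp [hA'', (Fin.castSucc_lt_last i).ne]
    have hA''cl : ∀ i : Fin n, A'' i.castSucc (Fin.last n) = A' i.castSucc (Fin.last n) := by
      intro i
      simp [hA'', (Fin.castSucc_lt_last i).ne]
    have hA''lc : ∀ j : Fin n, A'' (Fin.last n) j.castSucc = A' (Fin.last n) j.castSucc := by
      intro j
      simp [hA'', (Fin.castSucc_lt_last j).ne]
    -- rank of A'' is at most rank of A' plus 1
    have hrk : A''.rank ≤ A'.rank + 1 := by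
      set C : Matrix (Fin (n+1)) (Fin 1) ℝ :=
        fun p _ => if p = Fin.last n then d - A' (Fin.last n) (Fin.last n) else 0 with hC
      set R : Matrix (Fin 1) (Fin (n+1)) ℝ :=
        fun _ q => if q = Fin.last n then 1 else 0 with hR
      have hsplit : A'' = A' + C * R := by
        apply Matrix.ext
        intro p q
        rw [Matrix.add_apply, Matrix.mul_apply, Fin.sum_univ_one]
        by_cases hp : p = Fin.last n <;> by_cases hq : q = Fin.last n <;>
          simp [hA'', hC, hR, hp, hq]
      calc A''.rank = (A' + C * R).rank := by rw [hsplit]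
        _ ≤ A'.rank + (C * R).rank := myrank_add_le _ _
        _ ≤ A'.rank + C.rank := by
            have := Matrix.rank_mul_le_left C R; omega
        _ ≤ A'.rank + 1 := by
            have := Matrix.rank_le_card_width C
            simp only [Fintype.card_fin] at this
            omega
    have hnull'' : mynull A' ≤ mynull A'' + 1 := by
      have h1 := rank_add_mynull A'
      have h2 := rank_add_mynull A''
      omega
    -- the Schur complement of A''
    set S : Matrix (Fin n) (Fin n) ℝ := Matrix.of fun i j : Fin n =>
      A'' i.castSucc j.castSucc - A'' i.castSucc (Fin.last n) * A'' (Fin.last n) j.castSucc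
        / A'' (Fin.last n) (Fin.last n) with hS
    have hSnull : mynull S = mynull A'' := mynull_ext A'' (by rw [hA''ll]; exact hd0)
    have hSapp : ∀ i j : Fin n, S i j = A' i.castSucc j.castSucc
        - A' i.castSucc (Fin.last n) * A' (Fin.last n) j.castSucc / d := by
      intro i j
      rw [hS, Matrix.of_apply, hA''cc, hA''cl, hA''lc, hA''ll]
    -- pattern facts about A'
    have hcl : ∀ i : Fin n, (A' i.castSucc (Fin.last n) ≠ 0 ↔ i = u ∨ i = v) := by
      intro i
      rw [hpat' _ _ (Fin.castSucc_lt_last i).ne, G'.adj_comm, hnew]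
    have hlc : ∀ j : Fin n, (A' (Fin.last n) j.castSucc ≠ 0 ↔ j = u ∨ j = v) := by
      intro j
      rw [hpat' _ _ (Fin.castSucc_lt_last j).ne.symm, hnew]
    have hcc : ∀ i j : Fin n, i ≠ j →
        (A' i.castSucc j.castSucc ≠ 0 ↔ G.Adj i j ∧ s(i, j) ≠ s(u, v)) := by
      intro i j hij
      rw [hpat' _ _ (fun h => hij (Fin.castSucc_inj.mp h)), hold]
    -- S is symmetric
    have hSsymm : S.IsSymm := by
      apply Matrix.ext
      intro i j
      show S j i = S i j
      rw [hSapp, hSapp, hA' i.castSucc j.castSucc, hA' i.castSucc (Fin.last n),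
        hA' (Fin.last n) j.castSucc]
      ring
    -- S has the pattern of G
    have hSpat : ∀ i j, i ≠ j → (S i j ≠ 0 ↔ G.Adj i j) := by
      intro i j hij
      rw [hSapp]
      by_cases hc : (i = u ∧ j = v) ∨ (i = v ∧ j = u)
      · have hs : s(i, j) = s(u, v) := Sym2.eq_iff.mpr hc
        have hz : A' i.castSucc j.castSucc = 0 := by
          by_contra hnz
          exact ((hcc i j hij).mp hnz).2 hs
        have hiu : i = u ∨ i = v := by tauto
        have hju : j = u ∨ j = v := by tauto
        have h1 : A' i.castSucc (Fin.last n) ≠ 0 := (hcl i).mpr hiu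
        have h2 : A' (Fin.last n) j.castSucc ≠ 0 := (hlc j).mpr hju
        have hAdj : G.Adj i j := by
          rcases hc with ⟨rfl, rfl⟩ | ⟨rfl, rfl⟩
          · exact huv
          · exact huv.symm
        rw [hz]
        simp only [zero_sub, neg_ne_zero, hAdj, iff_true]
        exact div_ne_zero (mul_ne_zero h1 h2) hd0
      · have hprod : A' i.castSucc (Fin.last n) * A' (Fin.last n) j.castSucc = 0 := by
          by_cases hiu : i = u ∨ i = v
          · have hju : ¬(j = u ∨ j = v) := by
              rintro (rfl | rfl) <;> rcases hiu with rfl | rfl <;> tauto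
            have : A' (Fin.last n) j.castSucc = 0 := by
              by_contra hnz; exact hju ((hlc j).mp hnz)
            rw [this, mul_zero]
          · have : A' i.castSucc (Fin.last n) = 0 := by
              by_contra hnz; exact hiu ((hcl i).mp hnz)
            rw [this, zero_mul]
        have hs : s(i, j) ≠ s(u, v) := fun h => hc (Sym2.eq_iff.mp h)
        rw [hprod, zero_div, sub_zero, hcc i j hij]
        exact and_iff_left hs
    refine ⟨mynull S, ⟨S, hSsymm, hSpat, rfl⟩, ?_⟩
    rw [hSnull, ← hk]
    exact hnull''
  -- conclusion
  have hneG' : SG'.Nonempty := hneG.mono step1 |>.mono (le_refl _)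
  have h1 : maxNullity G ≤ maxNullity G' := by
    rw [hMG, hMG']
    exact csSup_le_csSup bddG' hneG step1
  have h2 : maxNullity G' ≤ maxNullity G + 1 := by
    rw [hMG, hMG']
    apply csSup_le hneG'
    intro k hk
    obtain ⟨k', hk', hle⟩ := step2 k hk
    exact le_trans hle (by have := le_csSup bddG hk'; omega)
  omega
end

section
/- Let G be the path graph P_n (n ≥ 2) with vertices v₁,…,v_n in path order, and let N ⊆ V(G) be an independent set with |N| ≥ 2. Let i be the smallest index with v_i ∈ N. Then B = {v₁} ∪ (N \ {v_i}) is a zero forcing set of every graph H obtained from P_n by adding any set of edges between vertices of N; hence |B| = |N| vertices suffice to zero-force all such H. -/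
/-- The zero forcing closure: vertices that eventually become blue starting
from `B`, where a blue vertex with exactly one white neighbor forces that
neighbor blue. -/
inductive ZFClosure {V : Type*} (G : SimpleGraph V) (B : Set V) : V → Prop
  | init (v : V) (hv : v ∈ B) : ZFClosure G B v
  | force (u w : V) (hu : ZFClosure G B u) (hadj : G.Adj u w)
      (h : ∀ z, G.Adj u z → z ≠ w → ZFClosure G B z) : ZFClosure G B w

/-- `B` is a zero forcing set of `G`. -/
def IsZeroForcingSet {V : Type*} (G : SimpleGraph V) (B : Set V) : Prop :=
  ∀ v, ZFClosure G B v

/-- The path graph on `Fin n` with vertices in path order. -/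
def pathG (n : ℕ) : SimpleGraph (Fin n) :=
  SimpleGraph.fromRel (fun i j => (i : ℕ) + 1 = (j : ℕ))

lemma pathG_adj {n : ℕ} {x y : Fin n} :
    (pathG n).Adj x y ↔ x ≠ y ∧ ((x : ℕ) + 1 = y ∨ (y : ℕ) + 1 = x) := by
  simp [pathG, SimpleGraph.fromRel_adj]

/-- Let N be an independent set of P_n with |N| ≥ 2, and i the smallest index
in N.  Then B = {v₁} ∪ (N \ {v_i}) is a zero forcing set of every graph H
obtained from P_n by adding any set of edges between vertices of N. -/
theorem stmt_17 (n : ℕ) (hn : 2 ≤ n) (N : Set (Fin n))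
    (hind : ∀ x ∈ N, ∀ y ∈ N, ¬ (pathG n).Adj x y)
    (hcard : 2 ≤ N.ncard)
    (i : Fin n) (hiN : i ∈ N) (himin : ∀ j ∈ N, i ≤ j)
    (H : SimpleGraph (Fin n))
    (hle : pathG n ≤ H)
    (hextra : ∀ x y, H.Adj x y → (pathG n).Adj x y ∨ (x ∈ N ∧ y ∈ N)) :
    IsZeroForcingSet H ({(⟨0, by omega⟩ : Fin n)} ∪ (N \ {i})) := by
  set B : Set (Fin n) := ({(⟨0, by omega⟩ : Fin n)} ∪ (N \ {i})) with hB
  have key : ∀ k : ℕ, ∀ v : Fin n, (v : ℕ) = k → ZFClosure H B v := by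
    intro k
    induction k using Nat.strong_induction_on with
    | _ k IH =>
      intro v hv
      match k, hv with
      | 0, hv =>
        exact ZFClosure.init v (Or.inl (by ext; simpa using hv))
      | (m+1), hv =>
        by_cases hvB : v ∈ N ∧ v ≠ i
        · exact ZFClosure.init v (Or.inr ⟨hvB.1, hvB.2⟩)
        · have hmn : m < n := by have := v.isLt; omega
          set u : Fin n := ⟨m, hmn⟩ with hu
          have hpadj : (pathG n).Adj u v := by
            rw [pathG_adj]
            constructor
            · intro h; apply_fun (Fin.val) at h; simp [hu, hv] at h
            · left; simp [hu, hv]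
          refine ZFClosure.force u v (IH m (by omega) u rfl) (hle hpadj) ?_
          intro z hz hzv
          rcases hextra u z hz with hp | ⟨huN, hzN⟩
          · rw [pathG_adj] at hp
            rcases hp.2 with h1 | h2
            · exfalso; apply hzv; ext; simp [hu] at h1; omega
            · exact IH (z : ℕ) (by simp [hu] at h2; omega) z rfl
          · -- u ∈ N, z ∈ N
            push_neg at hvB
            by_cases hvN : v ∈ N
            · -- then v = i, but i ≤ u < v, contradiction
              exfalso
              have hvi : v = i := hvB hvN
              have := himin u huN
              rw [Fin.le_def] at this
              simp [hu] at this
              rw [hvi] at hv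
              omega
            · by_cases hzi : z = i
              · have := himin u huN
                rw [Fin.le_def] at this
                simp [hu] at this
                subst hzi
                exact IH (z : ℕ) (by omega) z rfl
              · exact ZFClosure.init z (Or.inr ⟨hzN, hzi⟩)
  intro v
  exact key (v : ℕ) v rfl
end

section
/- Let C_n be the cycle v₁v₂…v_nv₁ (n ≥ 3) and N ⊆ V(C_n) an independent set with |N| ≥ 2. Let i be the smallest and j the largest index with v_i, v_j ∈ N. Then B = (N \ {v_i, v_j}) ∪ {v₁, v_n} is a zero forcing set of every graph H obtained from C_n by adding any set of edges between vertices of N. -/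
/-- The cycle graph on `Fin n` with vertices in cyclic order v₁ … v_n v₁. -/
def cycleG (n : ℕ) : SimpleGraph (Fin n) :=
  SimpleGraph.fromRel (fun i j => (i : ℕ) + 1 = (j : ℕ) ∨ ((i : ℕ) = n - 1 ∧ (j : ℕ) = 0))

lemma cyc_adj {n : ℕ} (hn : 3 ≤ n) (a b : Fin n) :
    (cycleG n).Adj a b ↔
      ((a:ℕ)+1 = b ∨ (b:ℕ)+1 = a ∨ ((a:ℕ) = n-1 ∧ (b:ℕ) = 0) ∨ ((b:ℕ) = n-1 ∧ (a:ℕ) = 0)) := by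
  have ha := a.isLt
  have hb := b.isLt
  simp only [cycleG, SimpleGraph.fromRel_adj, ne_eq, Fin.ext_iff]
  omega

lemma cyc_edge {n : ℕ} (hn : 3 ≤ n) (k : ℕ) (hk : k + 1 < n) :
    (cycleG n).Adj ⟨k, by omega⟩ ⟨k+1, hk⟩ := by
  rw [cyc_adj hn]; exact Or.inl rfl


/-- Let N be an independent set of C_n (n ≥ 3) with |N| ≥ 2, i the smallest and
j the largest index in N.  Then B = (N \ {v_i, v_j}) ∪ {v₁, v_n} is a zero
forcing set of every graph H obtained from C_n by adding any set of edges
between vertices of N. -/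
theorem stmt_18 (n : ℕ) (hn : 3 ≤ n) (N : Set (Fin n))
    (hind : ∀ x ∈ N, ∀ y ∈ N, ¬ (cycleG n).Adj x y)
    (hcard : 2 ≤ N.ncard)
    (i j : Fin n) (hiN : i ∈ N) (hjN : j ∈ N)
    (himin : ∀ x ∈ N, i ≤ x) (hjmax : ∀ x ∈ N, x ≤ j)
    (H : SimpleGraph (Fin n))
    (hle : cycleG n ≤ H)
    (hextra : ∀ x y, H.Adj x y → (cycleG n).Adj x y ∨ (x ∈ N ∧ y ∈ N)) :
    IsZeroForcingSet H
      ((N \ {i, j}) ∪ {(⟨0, by omega⟩ : Fin n), (⟨n - 1, by omega⟩ : Fin n)}) := by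
  set S := (N \ {i, j}) ∪ {(⟨0, by omega⟩ : Fin n), (⟨n - 1, by omega⟩ : Fin n)} with hSdef
  have hi := i.isLt
  have hj := j.isLt
  have h0S : ∀ h0 : (0:ℕ) < n, (⟨0, h0⟩ : Fin n) ∈ S := fun h0 =>
    Set.mem_union_right _ (Set.mem_insert _ _)
  have hnS : ∀ hn1 : n - 1 < n, (⟨n-1, hn1⟩ : Fin n) ∈ S := fun hn1 =>
    Set.mem_union_right _ (Set.mem_insert_of_mem _ rfl)
  have hNS : ∀ x ∈ N, x ≠ i → x ≠ j → x ∈ S := fun x hx h1 h2 =>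
    Set.mem_union_left _ ⟨hx, by simp [h1, h2]⟩
  -- Phase 1: vertices 0 .. i are blue
  have blue_lo : ∀ k : ℕ, ∀ hk : k < n, k ≤ (i:ℕ) → ZFClosure H S ⟨k, hk⟩ := by
    intro k
    induction k using Nat.strong_induction_on with
    | _ k IH =>
      intro hk hki
      match k, hk, hki, IH with
      | 0, hk, hki, IH => exact ZFClosure.init _ (h0S hk)
      | (m+1), hk, hki, IH =>
        have hu : ZFClosure H S ⟨m, by omega⟩ := IH m (by omega) (by omega) (by omega)
        refine ZFClosure.force ⟨m, by omega⟩ _ hu (hle (cyc_edge hn m hk)) ?_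
        intro z hz hzw
        rcases hextra _ _ hz with hcyc | ⟨hmN, _⟩
        · rw [cyc_adj hn] at hcyc
          simp only [ne_eq, Fin.ext_iff, Fin.val_mk] at hzw hcyc
          have hzlt := z.isLt
          rcases hcyc with h1 | h2 | h3 | h4
        -- h1 : m + 1 = z.val, contradicts hzw
          · exfalso; omega
          · -- z.val + 1 = m, so z = ⟨m-1⟩
            have hzeq : z = ⟨m-1, by omega⟩ := Fin.ext (by simp only [Fin.val_mk]; omega)
            rw [hzeq]
            exact IH (m-1) (by omega) (by omega) (by omega)
          · -- m = n-1 : impossible since m < i ≤ n-1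
            exfalso; omega
          · -- z = n-1
            have hzeq : z = ⟨n-1, by omega⟩ := Fin.ext (by simp only [Fin.val_mk]; omega)
            rw [hzeq]
            exact ZFClosure.init _ (hnS (by omega))
        · exfalso
          have := himin _ hmN
          rw [Fin.le_def] at this
          simp at this
          omega
  -- Phase 2: vertices j .. n-1 are blue
  have blue_hi : ∀ d : ℕ, ∀ k : ℕ, ∀ hk : k < n, n - 1 - k = d → (j:ℕ) ≤ k →
      ZFClosure H S ⟨k, hk⟩ := by
    intro d
    induction d using Nat.strong_induction_on with
    | _ d IH =>
      intro k hk hd hjk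
      by_cases hk1 : k = n - 1
      · subst hk1
        exact ZFClosure.init _ (hnS hk)
      · have hu : ZFClosure H S ⟨k+1, by omega⟩ :=
          IH (n-1-(k+1)) (by omega) (k+1) (by omega) rfl (by omega)
        refine ZFClosure.force ⟨k+1, by omega⟩ _ hu (hle (cyc_edge hn k (by omega)).symm) ?_
        intro z hz hzw
        rcases hextra _ _ hz with hcyc | ⟨huN, _⟩
        · rw [cyc_adj hn] at hcyc
          simp only [ne_eq, Fin.ext_iff, Fin.val_mk] at hzw hcyc
          have hzlt := z.isLt
          rcases hcyc with h1 | h2 | h3 | h4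
          · -- (k+1)+1 = z.val : z = k+2, blue by IH
            have hzeq : z = ⟨k+2, by omega⟩ := Fin.ext (by simp only [Fin.val_mk]; omega)
            rw [hzeq]
            exact IH (n-1-(k+2)) (by omega) (k+2) (by omega) rfl (by omega)
          · -- z.val + 1 = k+1 : z = k = w, contradiction
            exfalso; omega
          · -- k+1 = n-1 ∧ z = 0
            have hzeq : z = ⟨0, by omega⟩ := Fin.ext (by simp only [Fin.val_mk]; omega)
            rw [hzeq]
            exact ZFClosure.init _ (h0S (by omega))
          · -- k+1 = 0 impossible
            exfalso; omega
        · exfalso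
          have := hjmax _ huN
          rw [Fin.le_def] at this
          simp at this
          omega
  have blue_i : ZFClosure H S i := blue_lo i.val i.isLt le_rfl
  have blue_j : ZFClosure H S j := blue_hi (n-1-j.val) j.val j.isLt rfl le_rfl
  have hNblue : ∀ x ∈ N, ZFClosure H S x := by
    intro x hx
    by_cases h1 : x = i
    · subst h1; exact blue_i
    by_cases h2 : x = j
    · subst h2; exact blue_j
    exact ZFClosure.init _ (hNS x hx h1 h2)
  -- Phase 3: vertices i .. j are blue
  have blue_mid : ∀ d : ℕ, ∀ hd : (i:ℕ) + d ≤ (j:ℕ), ZFClosure H S ⟨(i:ℕ) + d, by omega⟩ := by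
    intro d
    induction d using Nat.strong_induction_on with
    | _ d IH =>
      intro hd
      match d, hd, IH with
      | 0, hd, IH =>
        have : (⟨(i:ℕ) + 0, by omega⟩ : Fin n) = i := Fin.ext (by simp only [Fin.val_mk]; omega)
        rw [this]; exact blue_i
      | (m+1), hd, IH =>
        have hu : ZFClosure H S ⟨(i:ℕ) + m, by omega⟩ := IH m (by omega) (by omega)
        refine ZFClosure.force ⟨(i:ℕ)+m, by omega⟩ _ hu (hle (cyc_edge hn ((i:ℕ)+m) (by omega))) ?_
        intro z hz hzw
        rcases hextra _ _ hz with hcyc | ⟨_, hzN⟩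
        · rw [cyc_adj hn] at hcyc
          simp only [ne_eq, Fin.ext_iff, Fin.val_mk] at hzw hcyc
          have hzlt := z.isLt
          rcases hcyc with h1 | h2 | h3 | h4
          · exfalso; omega
          · -- z.val + 1 = i + m
            by_cases hm : m = 0
            · -- z.val + 1 = i, so z.val < i : phase 1
              have hzeq : z = ⟨z.val, hzlt⟩ := Fin.ext rfl
              rw [hzeq]
              exact blue_lo z.val hzlt (by omega)
            · have hzeq : z = ⟨(i:ℕ) + (m-1), by omega⟩ := Fin.ext (by simp only [Fin.val_mk]; omega)
              rw [hzeq]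
              exact IH (m-1) (by omega) (by omega)
          · -- i + m = n - 1, impossible since i+m < j ≤ n-1
            exfalso; omega
          · -- z = n-1 ∧ i+m = 0
            have hzeq : z = ⟨n-1, by omega⟩ := Fin.ext (by simp only [Fin.val_mk]; omega)
            rw [hzeq]
            exact ZFClosure.init _ (hnS (by omega))
        · exact hNblue z hzN
  intro v
  have hv := v.isLt
  rcases le_or_gt (v:ℕ) (i:ℕ) with hvi | hvi
  · have := blue_lo v.val v.isLt hvi
    rwa [show (⟨v.val, v.isLt⟩ : Fin n) = v from Fin.ext rfl] at this
  rcases le_or_gt (j:ℕ) (v:ℕ) with hjv | hjv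
  · have := blue_hi (n-1-v.val) v.val v.isLt rfl hjv
    rwa [show (⟨v.val, v.isLt⟩ : Fin n) = v from Fin.ext rfl] at this
  · have := blue_mid (v.val - i.val) (by omega)
    rwa [show (⟨(i:ℕ) + (v.val - i.val), by omega⟩ : Fin n) = v from Fin.ext (by simp only [Fin.val_mk]; omega)] at this
end

section
/- Let G be a graph with an independent set N, and let B be a zero forcing set (under the probe color change rule, equivalently a common zero forcing set for all graphs obtained by adding edges within N) such that N ⊄ B ∪ (reversal of B) in the following sense: B does not contain N, and N is not the set of terminal vertices of some set of forcing chains of B. Then N is a vertex cut of G. -/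
/-- The set of blue vertices after the first `t` forces of the list `L` have
been performed, starting from the initially blue set `B`. -/
def blueAt {V : Type*} (B : Set V) (L : List (V × V)) (t : ℕ) : Set V :=
  B ∪ {w | ∃ u, (u, w) ∈ L.take t}

/-- `L` is a valid chronological list of forces for the probe color change rule
on `G` with non-probe set `N` and initial blue set `B`:  at each step the
forcing vertex is blue, the forced vertex is white, all other neighbors of the
forcing vertex are blue, and a non-probe vertex may force only after all of `N`
is blue.  Each vertex forces at most once and is forced at most once, so the
forces form a set of forcing chains. -/
def IsProbeForcingProcess {V : Type*} (G : SimpleGraph V) (N B : Set V)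
    (L : List (V × V)) : Prop :=
  (L.map Prod.fst).Nodup ∧ (L.map Prod.snd).Nodup ∧
  ∀ t : Fin L.length,
    (L.get t).1 ∈ blueAt B L t ∧
    (L.get t).2 ∉ blueAt B L t ∧
    G.Adj (L.get t).1 (L.get t).2 ∧
    (∀ z, G.Adj (L.get t).1 z → z ≠ (L.get t).2 → z ∈ blueAt B L t) ∧
    ((L.get t).1 ∈ N → N ⊆ blueAt B L t)

/-- `B` is a probe zero forcing set: some valid probe forcing process colors all
of `V` blue. -/
def IsProbeZeroForcingSet {V : Type*} (G : SimpleGraph V) (N B : Set V) : Prop :=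
  ∃ L : List (V × V), IsProbeForcingProcess G N B L ∧
    ∀ v : V, v ∈ blueAt B L L.length

private lemma blueAt_mono {V : Type*} (B : Set V) (L : List (V × V)) {s t : ℕ} (h : s ≤ t) :
    blueAt B L s ⊆ blueAt B L t := by
  intro v hv
  rcases hv with hv | ⟨u, hu⟩
  · exact Or.inl hv
  · refine Or.inr ⟨u, ?_⟩
    rw [List.mem_take_iff_getElem] at hu ⊢
    obtain ⟨i, hi, hget⟩ := hu
    exact ⟨i, lt_min (lt_of_lt_of_le (lt_min_iff.mp hi).1 h) (lt_min_iff.mp hi).2, hget⟩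

/-- Suppose N is an independent set of G, B is a minimum probe zero forcing set
with |B| = |N|, B does not contain N, and there is a set of forcing chains of B
(a complete probe forcing process) whose reversal (set of terminal vertices,
those that force no one) is not N.  Then N is a vertex cut of G. -/
theorem stmt_19 {V : Type*} [Fintype V] (G : SimpleGraph V) (N B : Set V)
    (hind : ∀ x ∈ N, ∀ y ∈ N, ¬ G.Adj x y)
    (hB : IsProbeZeroForcingSet G N B)
    (hmin : ∀ B' : Set V, IsProbeZeroForcingSet G N B' → B.ncard ≤ B'.ncard)
    (hcard : B.ncard = N.ncard)
    (hNB : ¬ N ⊆ B)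
    (hrev : ∃ L : List (V × V), IsProbeForcingProcess G N B L ∧
      (∀ v : V, v ∈ blueAt B L L.length) ∧
      {v : V | ∀ w, (v, w) ∉ L} ≠ N) :
    ¬ (G.induce {v : V | v ∉ N}).Connected := by
  classical
  obtain ⟨L, ⟨hfst, hsnd, hstep⟩, hcompl, hne⟩ := hrev
  intro hcon
  set T := L.length with hTdef
  have hTset : T ∈ {t : ℕ | N ⊆ blueAt B L t} := fun v _ => hcompl v
  set T₀ := sInf {t : ℕ | N ⊆ blueAt B L t} with hT₀def
  have hT₀mem : N ⊆ blueAt B L T₀ := Nat.sInf_mem ⟨T, hTset⟩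
  have hT₀le : T₀ ≤ T := Nat.sInf_le hTset
  have hT₀min : ∀ t, t < T₀ → ¬ N ⊆ blueAt B L t := fun t ht hsub =>
    Nat.notMem_of_lt_sInf ht hsub
  set S := blueAt B L T₀ with hSdef
  set FF : Finset V := ((L.take T₀).map Prod.snd).toFinset with hFFdef
  set PF : Finset V := ((L.take T₀).map Prod.fst).toFinset with hPFdef
  have hFFnodup : ((L.take T₀).map Prod.snd).Nodup :=
    hsnd.sublist (List.Sublist.map _ (List.take_sublist _ _))
  have hPFnodup : ((L.take T₀).map Prod.fst).Nodup :=
    hfst.sublist (List.Sublist.map _ (List.take_sublist _ _))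
  have hFFcard : (↑FF : Set V).ncard = T₀ := by
    rw [Set.ncard_coe_finset, hFFdef, List.toFinset_card_of_nodup hFFnodup,
      List.length_map, List.length_take]
    exact min_eq_left hT₀le
  have hPFcard : (↑PF : Set V).ncard = T₀ := by
    rw [Set.ncard_coe_finset, hPFdef, List.toFinset_card_of_nodup hPFnodup,
      List.length_map, List.length_take]
    exact min_eq_left hT₀le
  have hmemFF : ∀ w : V, w ∈ FF ↔ ∃ i : ℕ, ∃ h : i < T, i < T₀ ∧ (L.get ⟨i, h⟩).2 = w := by
    intro w
    rw [hFFdef, List.mem_toFinset, List.mem_map]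
    constructor
    · rintro ⟨p, hp, rfl⟩
      rw [List.mem_take_iff_getElem] at hp
      obtain ⟨i, hi, hget⟩ := hp
      exact ⟨i, (lt_min_iff.mp hi).2, (lt_min_iff.mp hi).1,
        by simp only [List.get_eq_getElem, hget]⟩
    · rintro ⟨i, h, hiT₀, hget⟩
      refine ⟨L.get ⟨i, h⟩, ?_, hget⟩
      rw [List.mem_take_iff_getElem]
      exact ⟨i, lt_min hiT₀ h, by simp only [List.get_eq_getElem]⟩
  have hmemPF : ∀ u : V, u ∈ PF ↔ ∃ i : ℕ, ∃ h : i < T, i < T₀ ∧ (L.get ⟨i, h⟩).1 = u := by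
    intro u
    rw [hPFdef, List.mem_toFinset, List.mem_map]
    constructor
    · rintro ⟨p, hp, rfl⟩
      rw [List.mem_take_iff_getElem] at hp
      obtain ⟨i, hi, hget⟩ := hp
      exact ⟨i, (lt_min_iff.mp hi).2, (lt_min_iff.mp hi).1,
        by simp only [List.get_eq_getElem, hget]⟩
    · rintro ⟨i, h, hiT₀, hget⟩
      refine ⟨L.get ⟨i, h⟩, ?_, hget⟩
      rw [List.mem_take_iff_getElem]
      exact ⟨i, lt_min hiT₀ h, by simp only [List.get_eq_getElem]⟩
  have hSeq : S = B ∪ ↑FF := by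
    rw [hSdef]
    unfold blueAt
    congr 1
    ext w
    simp only [Set.mem_setOf_eq, Finset.mem_coe]
    rw [hmemFF]
    constructor
    · rintro ⟨u, hu⟩
      rw [List.mem_take_iff_getElem] at hu
      obtain ⟨i, hi, hget⟩ := hu
      exact ⟨i, (lt_min_iff.mp hi).2, (lt_min_iff.mp hi).1,
        by simp only [List.get_eq_getElem, hget]⟩
    · rintro ⟨i, h, hiT₀, hget⟩
      refine ⟨(L.get ⟨i, h⟩).1, ?_⟩
      rw [List.mem_take_iff_getElem]
      refine ⟨i, lt_min hiT₀ h, ?_⟩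
      rw [← hget, List.get_eq_getElem]
  have hdisj : Disjoint B (↑FF : Set V) := by
    rw [Set.disjoint_left]
    intro w hwB hwFF
    rw [Finset.mem_coe, hmemFF] at hwFF
    obtain ⟨i, h, hiT₀, hget⟩ := hwFF
    exact (hstep ⟨i, h⟩).2.1 (hget ▸ Or.inl hwB)
  have hScard : S.ncard = N.ncard + T₀ := by
    rw [hSeq, Set.ncard_union_eq hdisj (Set.toFinite _) (Set.toFinite _), hFFcard, ← hcard]
  have hNS : N ⊆ S := hT₀mem
  have hSNcard : (S \ N).ncard = T₀ := by
    rw [Set.ncard_diff hNS (Set.toFinite _), hScard, Nat.add_sub_cancel_left]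
  have hPFsub : (↑PF : Set V) ⊆ S \ N := by
    intro u hu
    rw [Finset.mem_coe, hmemPF] at hu
    obtain ⟨i, h, hiT₀, hget⟩ := hu
    constructor
    · exact blueAt_mono B L (le_of_lt hiT₀) (hget ▸ (hstep ⟨i, h⟩).1)
    · intro huN
      exact hT₀min i hiT₀ ((hstep ⟨i, h⟩).2.2.2.2 (hget ▸ huN))
  have hPFeq : (↑PF : Set V) = S \ N :=
    Set.eq_of_subset_of_ncard_le hPFsub (by rw [hSNcard, hPFcard]) (Set.toFinite _)
  have hclosed : ∀ u ∈ S \ N, ∀ z, G.Adj u z → z ∈ S := by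
    intro u hu z hz
    rw [← hPFeq, Finset.mem_coe, hmemPF] at hu
    obtain ⟨i, h, hiT₀, hget⟩ := hu
    by_cases hzv : z = (L.get ⟨i, h⟩).2
    · rw [hSeq]
      right
      rw [Finset.mem_coe, hmemFF]
      exact ⟨i, h, hiT₀, hzv.symm⟩
    · exact blueAt_mono B L (le_of_lt hiT₀)
        ((hstep ⟨i, h⟩).2.2.2.1 z (hget ▸ hz) hzv)
  -- some vertex of N forces
  have hforce : ∃ i : ℕ, ∃ h : i < T, (L.get ⟨i, h⟩).1 ∈ N := by
    by_contra hcontra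
    push_neg at hcontra
    apply hne
    symm
    refine Set.eq_of_subset_of_ncard_le ?_ ?_ (Set.toFinite _)
    · intro a haN w haw
      rw [List.mem_iff_getElem] at haw
      obtain ⟨i, hi, hget⟩ := haw
      have : (L.get ⟨i, hi⟩).1 ∉ N := hcontra i hi
      rw [List.get_eq_getElem, hget] at this
      exact this haN
    · -- ncard of the reversal ≤ ncard N
      have hrevC : {v : V | ∀ w, (v, w) ∉ L} = (↑((L.map Prod.fst).toFinset) : Set V)ᶜ := by
        ext v
        simp only [Set.mem_setOf_eq, Set.mem_compl_iff, Finset.mem_coe, List.mem_toFinset,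
          List.mem_map, not_exists]
        constructor
        · rintro hv p ⟨hp, rfl⟩
          exact hv p.2 hp
        · intro hv w hw
          exact hv (v, w) ⟨hw, rfl⟩
      have hAllcard : (↑((L.map Prod.fst).toFinset) : Set V).ncard = T := by
        rw [Set.ncard_coe_finset, List.toFinset_card_of_nodup hfst, List.length_map]
      have huniv : (Set.univ : Set V) = B ∪ ↑((L.map Prod.snd).toFinset) := by
        apply (Set.eq_univ_of_forall ?_).symm
        intro v
        rcases hcompl v with hv | ⟨u, hu⟩
        · exact Or.inl hv
        · right
          rw [Finset.mem_coe, List.mem_toFinset, List.mem_map]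
          rw [List.take_length] at hu
          exact ⟨(u, v), hu, rfl⟩
      have hdisj2 : Disjoint B (↑((L.map Prod.snd).toFinset) : Set V) := by
        rw [Set.disjoint_left]
        intro w hwB hwS
        rw [Finset.mem_coe, List.mem_toFinset, List.mem_map] at hwS
        obtain ⟨p, hp, rfl⟩ := hwS
        rw [List.mem_iff_getElem] at hp
        obtain ⟨i, hi, hget⟩ := hp
        apply (hstep ⟨i, hi⟩).2.1
        rw [List.get_eq_getElem, hget]
        exact Or.inl hwB
      have hsndcard : (↑((L.map Prod.snd).toFinset) : Set V).ncard = T := by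
        rw [Set.ncard_coe_finset, List.toFinset_card_of_nodup hsnd, List.length_map]
      have hunivcard : (Set.univ : Set V).ncard = N.ncard + T := by
        rw [huniv, Set.ncard_union_eq hdisj2 (Set.toFinite _) (Set.toFinite _),
          hsndcard, ← hcard]
      have hcompl_card := Set.ncard_add_ncard_compl
        ((↑((L.map Prod.fst).toFinset) : Set V)) (Set.toFinite _) (Set.toFinite _)
      rw [hrevC]
      rw [← Set.ncard_univ V, hunivcard] at hcompl_card
      omega
  obtain ⟨i, hi, haN⟩ := hforce
  have hT₀i : T₀ ≤ i := Nat.sInf_le ((hstep ⟨i, hi⟩).2.2.2.2 haN)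
  set c := (L.get ⟨i, hi⟩).2 with hcdef
  have hcS : c ∉ S := fun hc => (hstep ⟨i, hi⟩).2.1 (blueAt_mono B L hT₀i hc)
  have hcN : c ∉ N := fun hc => hcS (hNS hc)
  -- B \ N is nonempty
  have hBN : ∃ u₀, u₀ ∈ B ∧ u₀ ∉ N := by
    by_contra hcontra
    push_neg at hcontra
    exact hNB ((Set.eq_of_subset_of_ncard_le hcontra hcard.ge (Set.toFinite _)) ▸
      Set.Subset.rfl)
  obtain ⟨u₀, hu₀B, hu₀N⟩ := hBN
  have hu₀S : u₀ ∈ S := Or.inl hu₀B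
  -- walk argument
  have hwalk : ∀ (x y : {v : V | v ∉ N}) (p : (G.induce {v : V | v ∉ N}).Walk x y),
      (x : V) ∈ S → (y : V) ∈ S := by
    intro x y p
    induction p with
    | nil => exact id
    | @cons a b y h p ih =>
      intro ha
      exact ih (hclosed a ⟨ha, a.2⟩ b (SimpleGraph.comap_adj.mp h))
  obtain ⟨p⟩ := hcon.preconnected ⟨u₀, hu₀N⟩ ⟨c, hcN⟩
  exact hcS (hwalk _ _ p hu₀S)
end
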